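/- arXiv:0901.4223 — 6 statements merged into one kernel-verified Lean document; each statement's English description precedes it below -/
import Mathlib

section
/- Let b, s, t be complex numbers with Re s > 0, Re t > 0 and Re(b + s + t) < 0. Then the double integral ∫_0^∞ ∫_0^∞ (1 + v + z)^b · v^{s−1} · z^{t−1} dv dz equals Γ(s) Γ(t) Γ(−b−s−t) / Γ(−b). -/
open MeasureTheory Set Complex

noncomputable def mmap (x : ℝ) : ℝ := x / (1 - x)

lemma mmap_hasDeriv {x : ℝ} (hx : x ∈ Set.Ioo (0:ℝ) 1) :
    HasDerivWithinAt mmap (((1-x)^2)⁻¹) (Set.Ioo 0 1) x := by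
  have h1 : (1 - x) ≠ 0 := by nlinarith [hx.2]
  have : HasDerivAt mmap ((1 * (1 - x) - x * (0 - 1)) / (1 - x) ^ 2) x :=
    (hasDerivAt_id x).div ((hasDerivAt_const x 1).sub (hasDerivAt_id x)) h1
  have h2 : (1 * (1 - x) - x * (0 - 1)) / (1 - x) ^ 2 = ((1-x)^2)⁻¹ := by ring
  rw [h2] at this
  exact this.hasDerivWithinAt

lemma mmap_injOn : Set.InjOn mmap (Set.Ioo (0:ℝ) 1) := by
  intro x hx y hy h
  have h1 : (1 - x) ≠ 0 := by nlinarith [hx.2]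
  have h2 : (1 - y) ≠ 0 := by nlinarith [hy.2]
  simp only [mmap] at h
  field_simp at h
  linarith

lemma mmap_image : mmap '' (Set.Ioo (0:ℝ) 1) = Set.Ioi (0:ℝ) := by
  ext v
  constructor
  · rintro ⟨x, hx, rfl⟩
    exact div_pos hx.1 (by linarith [hx.2])
  · intro hv
    refine ⟨v / (1 + v), ⟨div_pos hv (by linarith [mem_Ioi.mp hv]), ?_⟩, ?_⟩
    · rw [div_lt_one (by linarith [mem_Ioi.mp hv])]; linarith [mem_Ioi.mp hv]
    · have h1 : (1 + v) ≠ 0 := by have := mem_Ioi.mp hv; positivity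
      simp only [mmap]
      have hv' := mem_Ioi.mp hv
      have h2 : 1 - v / (1 + v) = 1 / (1+v) := by field_simp; ring
      rw [h2]
      field_simp

lemma key_pointwise (b s : ℂ) {x : ℝ} (hx : x ∈ Set.Ioo (0:ℝ) 1) :
    |((1-x)^2)⁻¹| • ((((1 + mmap x : ℝ)):ℂ)^b * ((mmap x : ℝ):ℂ)^(s-1)) =
      ((x:ℝ):ℂ)^(s-1) * ((1-x:ℝ):ℂ)^((-b-s)-1) := by
  have hx0 : 0 < x := hx.1
  have hu : 0 < 1 - x := by linarith [hx.2]
  have huC : ((1-x:ℝ):ℂ) ≠ 0 := Complex.ofReal_ne_zero.mpr hu.ne'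
  have harg : ((1-x:ℝ):ℂ).arg ≠ Real.pi := by
    rw [Complex.arg_ofReal_of_nonneg hu.le]
    exact fun h => Real.pi_ne_zero h.symm
  have h1 : (1 + mmap x : ℝ) = (1-x)⁻¹ := by
    have hu' : (1 - x) ≠ 0 := hu.ne'
    simp only [mmap]
    field_simp
    ring
  have h2 : (mmap x : ℝ) = x * (1-x)⁻¹ := by
    simp [mmap, div_eq_mul_inv]
  rw [h1, h2]
  have e1 : (((1-x)⁻¹ : ℝ):ℂ)^b = ((1-x:ℝ):ℂ)^(-b) := by
    rw [Complex.ofReal_inv, Complex.inv_cpow _ _ harg, ← Complex.cpow_neg]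
  have e2 : ((x * (1-x)⁻¹ : ℝ):ℂ)^(s-1)
      = ((x:ℝ):ℂ)^(s-1) * ((1-x:ℝ):ℂ)^(1-s) := by
    rw [Complex.ofReal_mul, Complex.mul_cpow_ofReal_nonneg hx0.le (inv_nonneg.mpr hu.le)]
    congr 1
    rw [Complex.ofReal_inv, Complex.inv_cpow _ _ harg, ← Complex.cpow_neg, neg_sub]
  have e3 : ((((1-x)^2)⁻¹ : ℝ):ℂ) = ((1-x:ℝ):ℂ)^(-2 : ℂ) := by
    rw [show (-2 : ℂ) = -((2:ℕ):ℂ) by norm_num, Complex.cpow_neg, Complex.cpow_natCast]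
    push_cast
    ring
  rw [e1, e2, abs_of_pos (by positivity), Complex.real_smul, e3]
  rw [show ((1-x:ℝ):ℂ)^(-2:ℂ) * (((1-x:ℝ):ℂ)^(-b) * (((x:ℝ):ℂ)^(s-1) * ((1-x:ℝ):ℂ)^(1-s)))
      = ((x:ℝ):ℂ)^(s-1) * (((1-x:ℝ):ℂ)^(-2:ℂ) * ((1-x:ℝ):ℂ)^(-b) * ((1-x:ℝ):ℂ)^(1-s)) by ring]
  congr 1
  rw [← Complex.cpow_add _ _ huC, ← Complex.cpow_add _ _ huC]
  congr 1
  ring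

lemma one_dim_lemma (b s : ℂ) (hs : 0 < s.re) (hbs : (b+s).re < 0) :
    IntegrableOn (fun v : ℝ => ((1+v:ℝ):ℂ)^b * ((v:ℝ):ℂ)^(s-1)) (Set.Ioi 0) ∧
    ∫ v in Set.Ioi (0:ℝ), ((1+v:ℝ):ℂ)^b * ((v:ℝ):ℂ)^(s-1)
      = Complex.Gamma s * Complex.Gamma (-b-s) / Complex.Gamma (-b) := by
  set g : ℝ → ℂ := fun v => ((1+v:ℝ):ℂ)^b * ((v:ℝ):ℂ)^(s-1) with hg
  have hbs' : 0 < (-b-s).re := by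
    simp only [Complex.sub_re, Complex.neg_re]
    simp only [Complex.add_re] at hbs
    linarith
  -- the beta integrand
  set B : ℝ → ℂ := fun x => ((x:ℝ):ℂ)^(s-1) * (1 - ((x:ℝ):ℂ))^((-b-s)-1) with hB
  have hcongr : ∀ x ∈ Set.Ioo (0:ℝ) 1, |((1-x)^2)⁻¹| • g (mmap x) = B x := by
    intro x hx
    rw [hB]
    have := key_pointwise b s hx
    simp only [hg]
    rw [this]
    norm_num
  have hBint : IntegrableOn B (Set.Ioo 0 1) := by
    have := Complex.betaIntegral_convergent hs hbs'
    have h2 : IntegrableOn (fun x : ℝ => ((x:ℝ):ℂ)^(s-1) * (1 - ((x:ℝ):ℂ))^((-b-s)-1))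
        (Set.Ioc 0 1) := by
      rw [← intervalIntegrable_iff_integrableOn_Ioc_of_le zero_le_one]
      exact this
    exact h2.mono_set Set.Ioo_subset_Ioc_self
  have hint : IntegrableOn g (Set.Ioi 0) := by
    rw [← mmap_image,
      integrableOn_image_iff_integrableOn_abs_deriv_smul measurableSet_Ioo
        (fun x hx => mmap_hasDeriv hx) mmap_injOn g]
    exact (integrableOn_congr_fun hcongr measurableSet_Ioo).mpr hBint
  refine ⟨hint, ?_⟩
  have hval : ∫ v in Set.Ioi (0:ℝ), g v = ∫ x in Set.Ioo (0:ℝ) 1, B x := by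
    rw [← mmap_image,
      integral_image_eq_integral_abs_deriv_smul measurableSet_Ioo
        (fun x hx => mmap_hasDeriv hx) mmap_injOn g]
    exact setIntegral_congr_fun measurableSet_Ioo hcongr
  have hbeta : ∫ x in Set.Ioo (0:ℝ) 1, B x = Complex.betaIntegral s (-b-s) := by
    rw [Complex.betaIntegral, intervalIntegral.integral_of_le zero_le_one,
      ← integral_Ioc_eq_integral_Ioo]
  have hgam := Complex.Gamma_mul_Gamma_eq_betaIntegral hs hbs'
  have hsum : s + (-b-s) = -b := by ring
  rw [hsum] at hgam
  have hGb : Complex.Gamma (-b) ≠ 0 := by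
    apply Complex.Gamma_ne_zero_of_re_pos
    have hball : b.re + s.re < 0 := by simpa using hbs
    simp only [Complex.neg_re]
    linarith
  rw [hval, hbeta]
  field_simp [hgam]
  rw [hgam]; ring

lemma one_dim_scaled (b s : ℂ) (hs : 0 < s.re) (hbs : (b+s).re < 0) {a : ℝ} (ha : 0 < a) :
    IntegrableOn (fun v : ℝ => ((a+v:ℝ):ℂ)^b * ((v:ℝ):ℂ)^(s-1)) (Set.Ioi 0) ∧
    ∫ v in Set.Ioi (0:ℝ), ((a+v:ℝ):ℂ)^b * ((v:ℝ):ℂ)^(s-1)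
      = ((a:ℝ):ℂ)^(b+s) * (Complex.Gamma s * Complex.Gamma (-b-s) / Complex.Gamma (-b)) := by
  obtain ⟨h1int, h1val⟩ := one_dim_lemma b s hs hbs
  set g : ℝ → ℂ := fun v => ((a+v:ℝ):ℂ)^b * ((v:ℝ):ℂ)^(s-1) with hg
  have haC : ((a:ℝ):ℂ) ≠ 0 := Complex.ofReal_ne_zero.mpr ha.ne'
  have hker : ∀ x ∈ Set.Ioi (0:ℝ), g (a * x)
      = (((a:ℝ):ℂ)^b * ((a:ℝ):ℂ)^(s-1)) * (((1+x:ℝ):ℂ)^b * ((x:ℝ):ℂ)^(s-1)) := by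
    intro x hx
    have hx0 : 0 < x := hx
    simp only [hg]
    have e1 : (a + a * x : ℝ) = a * (1 + x) := by ring
    rw [e1, Complex.ofReal_mul, Complex.mul_cpow_ofReal_nonneg ha.le (by linarith : (0:ℝ) ≤ 1 + x),
      Complex.ofReal_mul, Complex.mul_cpow_ofReal_nonneg ha.le hx0.le]
    ring
  constructor
  · rw [show Set.Ioi (0:ℝ) = Set.Ioi (a * 0) by rw [mul_zero],
      ← integrableOn_Ioi_comp_mul_left_iff g 0 ha]
    refine (integrableOn_congr_fun ?_ measurableSet_Ioi).mpr
      ((h1int.const_mul (((a:ℝ):ℂ)^b * ((a:ℝ):ℂ)^(s-1))))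
    intro x hx
    exact hker x hx
  · have := MeasureTheory.integral_comp_mul_left_Ioi g 0 ha
    rw [mul_zero] at this
    have hswap : ∫ x in Set.Ioi (0:ℝ), g (a * x)
        = (((a:ℝ):ℂ)^b * ((a:ℝ):ℂ)^(s-1)) * ∫ x in Set.Ioi (0:ℝ), ((1+x:ℝ):ℂ)^b * ((x:ℝ):ℂ)^(s-1) := by
      rw [← MeasureTheory.integral_const_mul]
      exact setIntegral_congr_fun measurableSet_Ioi hker
    rw [hswap, h1val] at this
    have : ∫ x in Set.Ioi (0:ℝ), g x
        = a • ((((a:ℝ):ℂ)^b * ((a:ℝ):ℂ)^(s-1)) * (Complex.Gamma s * Complex.Gamma (-b-s) / Complex.Gamma (-b))) := by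
      rw [this, smul_inv_smul₀ ha.ne']
    rw [this, Complex.real_smul]
    have : ((a:ℝ):ℂ) * (((a:ℝ):ℂ)^b * ((a:ℝ):ℂ)^(s-1)) = ((a:ℝ):ℂ)^(b+s) := by
      rw [show b + s = 1 + b + (s-1) by ring, Complex.cpow_add _ _ haC,
        Complex.cpow_add _ _ haC, Complex.cpow_one]
      ring
    rw [← mul_assoc, this]

lemma real_scaled (q p : ℝ) (hp : 0 < p) (hqp : q + p < 0) {a : ℝ} (ha : 0 < a) :
    IntegrableOn (fun v : ℝ => (a+v)^q * v^(p-1)) (Set.Ioi 0) ∧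
    ∫ v in Set.Ioi (0:ℝ), (a+v)^q * v^(p-1)
      = a^(q+p) * (Real.Gamma p * Real.Gamma (-q-p) / Real.Gamma (-q)) := by
  have hs : (0:ℝ) < ((q:ℂ)+(p:ℂ)).re → True := fun _ => trivial
  obtain ⟨hint, hval⟩ := one_dim_scaled (q:ℂ) (p:ℂ) (by simpa using hp)
    (by simp only [← Complex.ofReal_add]; simpa using hqp) ha
  have hptw : ∀ v ∈ Set.Ioi (0:ℝ),
      ((a+v:ℝ):ℂ)^(q:ℂ) * ((v:ℝ):ℂ)^((p:ℂ)-1) = (((a+v)^q * v^(p-1) : ℝ) : ℂ) := by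
    intro v hv
    have hv0 : (0:ℝ) < v := hv
    rw [Complex.ofReal_mul, Complex.ofReal_cpow (by linarith) q,
      Complex.ofReal_cpow hv0.le (p-1)]
    push_cast
    ring
  constructor
  · have h2 := hint.congr_fun hptw measurableSet_Ioi
    have h3 := h2.re
    refine MeasureTheory.IntegrableOn.congr_fun h3 (fun v hv => ?_) measurableSet_Ioi
    simp
  · have h2 : ∫ v in Set.Ioi (0:ℝ), ((a+v:ℝ):ℂ)^(q:ℂ) * ((v:ℝ):ℂ)^((p:ℂ)-1)
        = ∫ v in Set.Ioi (0:ℝ), (((a+v)^q * v^(p-1) : ℝ) : ℂ) :=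
      setIntegral_congr_fun measurableSet_Ioi hptw
    have hOf : (∫ v in Set.Ioi (0:ℝ), (((a+v)^q * v^(p-1) : ℝ) : ℂ))
        = ((∫ v in Set.Ioi (0:ℝ), (a+v)^q * v^(p-1) : ℝ) : ℂ) := by
      exact integral_ofReal
    rw [h2, hOf] at hval
    have h3 : ((a:ℝ):ℂ)^((q:ℂ)+(p:ℂ)) = ((a^(q+p) : ℝ) : ℂ) := by
      rw [Complex.ofReal_cpow ha.le, Complex.ofReal_add]
    have h4 : Complex.Gamma (p:ℂ) * Complex.Gamma (-(q:ℂ)-(p:ℂ)) / Complex.Gamma (-(q:ℂ))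
        = ((Real.Gamma p * Real.Gamma (-q-p) / Real.Gamma (-q) : ℝ) : ℂ) := by
      rw [show -(q:ℂ)-(p:ℂ) = ((-q-p:ℝ):ℂ) by push_cast; ring,
        show -(q:ℂ) = ((-q:ℝ):ℂ) by push_cast; ring,
        Complex.Gamma_ofReal, Complex.Gamma_ofReal, Complex.Gamma_ofReal]
      push_cast
      ring
    rw [h3, h4, ← Complex.ofReal_mul] at hval
    exact_mod_cast hval

theorem double_mellin_integral (b s t : ℂ) (hs : 0 < s.re) (ht : 0 < t.re)
    (hb : (b + s + t).re < 0) :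
    ∫ p in Set.Ioi (0 : ℝ) ×ˢ Set.Ioi (0 : ℝ),
        ((1 + p.1 + p.2 : ℝ) : ℂ) ^ b * ((p.1 : ℝ) : ℂ) ^ (s - 1) * ((p.2 : ℝ) : ℂ) ^ (t - 1) =
      Complex.Gamma s * Complex.Gamma t * Complex.Gamma (-b - s - t) / Complex.Gamma (-b) := by
  have hbre : b.re + s.re + t.re < 0 := by simpa using hb
  have hbt : (b + t).re < 0 := by simp only [Complex.add_re]; linarith
  have hbts : (b + t + s).re < 0 := by simp only [Complex.add_re]; linarith
  set f : ℝ × ℝ → ℂ := fun p =>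
    ((1 + p.1 + p.2 : ℝ) : ℂ) ^ b * ((p.1 : ℝ) : ℂ) ^ (s - 1) * ((p.2 : ℝ) : ℂ) ^ (t - 1)
    with hf
  set S : Set (ℝ × ℝ) := Set.Ioi (0 : ℝ) ×ˢ Set.Ioi (0 : ℝ) with hS
  have hSmeas : MeasurableSet S := measurableSet_Ioi.prod measurableSet_Ioi
  -- continuity
  have hcont : ContinuousOn f S := by
    have hc0 : Continuous (fun p : ℝ × ℝ => ((1 + p.1 + p.2 : ℝ) : ℂ)) :=
      Complex.continuous_ofReal.comp ((continuous_const.add continuous_fst).add continuous_snd)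
    intro p hp
    obtain ⟨hp1, hp2⟩ : p.1 ∈ Set.Ioi (0:ℝ) ∧ p.2 ∈ Set.Ioi (0:ℝ) := hp
    have hp1' : (0:ℝ) < p.1 := hp1
    have hp2' : (0:ℝ) < p.2 := hp2
    have h1 : ContinuousAt (fun p : ℝ × ℝ => ((1 + p.1 + p.2 : ℝ) : ℂ) ^ b) p :=
      ContinuousAt.cpow hc0.continuousAt continuousAt_const
        (Complex.ofReal_mem_slitPlane.mpr (by linarith))
    have h2 : ContinuousAt (fun p : ℝ × ℝ => ((p.1 : ℝ) : ℂ) ^ (s-1)) p :=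
      ContinuousAt.cpow (Complex.continuous_ofReal.comp continuous_fst).continuousAt
        continuousAt_const (Complex.ofReal_mem_slitPlane.mpr hp1')
    have h3 : ContinuousAt (fun p : ℝ × ℝ => ((p.2 : ℝ) : ℂ) ^ (t-1)) p :=
      ContinuousAt.cpow (Complex.continuous_ofReal.comp continuous_snd).continuousAt
        continuousAt_const (Complex.ofReal_mem_slitPlane.mpr hp2')
    exact ((h1.mul h2).mul h3).continuousWithinAt
  have hmeas : AEStronglyMeasurable f
      ((volume.restrict (Set.Ioi (0:ℝ))).prod (volume.restrict (Set.Ioi (0:ℝ)))) := by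
    rw [Measure.prod_restrict]
    exact hcont.aestronglyMeasurable hSmeas
  -- inner integrability for each v > 0
  have hinner : ∀ v : ℝ, v ∈ Set.Ioi (0:ℝ) →
      Integrable (fun z => f (v, z)) (volume.restrict (Set.Ioi (0:ℝ))) := by
    intro v hv
    have hv0 : (0:ℝ) < v := hv
    have h := (one_dim_scaled b t ht hbt (a := 1 + v) (by linarith)).1
    have h2 := h.const_mul (((v:ℝ):ℂ) ^ (s-1))
    refine h2.congr (Filter.Eventually.of_forall (fun z => ?_))
    simp only [hf]
    ring
  -- norm of inner integral
  set C : ℝ := Real.Gamma t.re * Real.Gamma (-b.re - t.re) / Real.Gamma (-b.re) with hC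
  have hnorm_int : ∀ v : ℝ, v ∈ Set.Ioi (0:ℝ) →
      (∫ z in Set.Ioi (0:ℝ), ‖f (v, z)‖)
        = v ^ (s.re - 1) * ((1 + v) ^ (b.re + t.re) * C) := by
    intro v hv
    have hv0 : (0:ℝ) < v := hv
    have hcongr : ∀ z ∈ Set.Ioi (0:ℝ), ‖f (v, z)‖
        = v ^ (s.re - 1) * (((1+v) + z) ^ b.re * z ^ (t.re - 1)) := by
      intro z hz
      have hz0 : (0:ℝ) < z := hz
      simp only [hf, norm_mul,
        Complex.norm_cpow_eq_rpow_re_of_pos (by linarith : (0:ℝ) < 1 + v + z),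
        Complex.norm_cpow_eq_rpow_re_of_pos hv0,
        Complex.norm_cpow_eq_rpow_re_of_pos hz0]
      simp only [Complex.sub_re, Complex.one_re]
      rw [show (1:ℝ) + v + z = (1+v) + z by ring]
      ring
    rw [setIntegral_congr_fun measurableSet_Ioi hcongr, MeasureTheory.integral_const_mul,
      (real_scaled b.re t.re ht (by linarith) (by linarith : (0:ℝ) < 1 + v)).2]
  -- integrability of the outer norm function
  have houter : Integrable (fun v => ∫ z in Set.Ioi (0:ℝ), ‖f (v, z)‖)
      (volume.restrict (Set.Ioi (0:ℝ))) := by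
    have h := ((real_scaled (b.re + t.re) s.re hs (by linarith) (a := 1)
      one_pos).1).const_mul C
    refine h.congr ?_
    refine (MeasureTheory.ae_restrict_mem measurableSet_Ioi).mono (fun v hv => ?_)
    dsimp only
    rw [hnorm_int v hv]
    ring
  -- integrability on the product
  have hint : Integrable f
      ((volume.restrict (Set.Ioi (0:ℝ))).prod (volume.restrict (Set.Ioi (0:ℝ)))) := by
    rw [MeasureTheory.integrable_prod_iff hmeas]
    exact ⟨(MeasureTheory.ae_restrict_mem measurableSet_Ioi).mono hinner, houter⟩
  have hintS : IntegrableOn f S := by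
    rw [IntegrableOn, MeasureTheory.Measure.volume_eq_prod, ← Measure.prod_restrict]
    exact hint
  -- Fubini
  have hfub : (∫ p in S, f p)
      = ∫ v in Set.Ioi (0:ℝ), ∫ z in Set.Ioi (0:ℝ), f (v, z) := by
    rw [MeasureTheory.Measure.volume_eq_prod]
    apply MeasureTheory.setIntegral_prod
    rw [← MeasureTheory.Measure.volume_eq_prod]
    exact hintS
  -- evaluate inner integral
  set K : ℂ := Complex.Gamma t * Complex.Gamma (-b - t) / Complex.Gamma (-b) with hK
  have hinnerval : ∀ v : ℝ, v ∈ Set.Ioi (0:ℝ) →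
      (∫ z in Set.Ioi (0:ℝ), f (v, z))
        = K * (((1+v:ℝ):ℂ) ^ (b + t) * ((v:ℝ):ℂ) ^ (s - 1)) := by
    intro v hv
    have hv0 : (0:ℝ) < v := hv
    have hcongr : ∀ z ∈ Set.Ioi (0:ℝ), f (v, z)
        = ((v:ℝ):ℂ)^(s-1) * ((((1+v) + z : ℝ):ℂ) ^ b * ((z:ℝ):ℂ) ^ (t-1)) := by
      intro z hz
      simp only [hf]
      rw [show (1:ℝ) + v + z = (1+v) + z by ring]
      ring
    rw [setIntegral_congr_fun measurableSet_Ioi hcongr, MeasureTheory.integral_const_mul,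
      (one_dim_scaled b t ht hbt (by linarith : (0:ℝ) < 1 + v)).2]
    rw [hK]
    ring
  rw [hfub, setIntegral_congr_fun measurableSet_Ioi hinnerval,
    MeasureTheory.integral_const_mul]
  have houterval := (one_dim_lemma (b+t) s hs hbts).2
  have hcongr2 : ∀ v ∈ Set.Ioi (0:ℝ),
      ((1+v:ℝ):ℂ) ^ (b + t) * ((v:ℝ):ℂ) ^ (s - 1)
        = ((1+v:ℝ):ℂ) ^ (b+t) * ((v:ℝ):ℂ) ^ (s - 1) := fun _ _ => rfl
  rw [houterval]
  -- final algebra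
  have hGbt : Complex.Gamma (-(b+t)) ≠ 0 := by
    apply Complex.Gamma_ne_zero_of_re_pos
    simp only [Complex.neg_re, Complex.add_re]
    linarith
  have hGb : Complex.Gamma (-b) ≠ 0 := by
    apply Complex.Gamma_ne_zero_of_re_pos
    simp only [Complex.neg_re]
    linarith
  rw [hK, show -(b+t) - s = -b - s - t by ring, show -b - t = -(b+t) by ring]
  generalize hX : Complex.Gamma (-(b+t)) = X at hGbt ⊢
  generalize hY : Complex.Gamma (-b) = Y at hGb ⊢
  field_simp
end

section
/- Let d and a be complex numbers with Re d > 0 and Re a < (1 − Re d)/2. Then ∫_0^∞ (cosh t)^{2a} · (sinh t)^{d−1} dt = Γ(d/2) · Γ(1/2 − a − d/2) / (2 Γ(1/2 − a)). -/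
open MeasureTheory

private lemma aux_sq_cpow {x : ℝ} (hx : 0 < x) (w : ℂ) :
    ((x ^ 2 : ℝ) : ℂ) ^ w = (x : ℂ) ^ (2 * w) := by
  have h0 : (x : ℂ) ≠ 0 := Complex.ofReal_ne_zero.2 hx.ne'
  rw [sq, Complex.ofReal_mul, Complex.mul_cpow_ofReal_nonneg hx.le hx.le,
    ← Complex.cpow_add _ _ h0, two_mul]

private lemma aux_inv_cpow {x : ℝ} (hx : 0 < x) (w : ℂ) :
    ((x⁻¹ : ℝ) : ℂ) ^ w = (x : ℂ) ^ (-w) := by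
  have harg : (Complex.ofReal x).arg ≠ Real.pi := by
    rw [Complex.arg_ofReal_of_nonneg hx.le]
    exact (Real.pi_ne_zero).symm
  rw [Complex.ofReal_inv, Complex.inv_cpow _ _ harg, ← Complex.cpow_neg]

private lemma aux_div_cpow {x y : ℝ} (hx : 0 < x) (hy : 0 < y) (w : ℂ) :
    ((x / y : ℝ) : ℂ) ^ w = (x : ℂ) ^ w * (y : ℂ) ^ (-w) := by
  rw [div_eq_mul_inv, Complex.ofReal_mul,
    Complex.mul_cpow_ofReal_nonneg hx.le (inv_nonneg.2 hy.le), aux_inv_cpow hy w]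

private lemma aux_cpow_arith {S C : ℂ} (hS : S ≠ 0) (hC : C ≠ 0) (d a : ℂ) :
    (2 * S * ((C ^ (3 : ℕ))⁻¹)) * (S ^ (d - 2) * C ^ (-(d - 2)) *
      C ^ (1 + 2 * a + d)) = 2 * (C ^ (2 * a) * S ^ (d - 1)) := by
  have hC3 : C ^ (3 : ℕ) ≠ 0 := pow_ne_zero _ hC
  have h1 : S * S ^ (d - 2) = S ^ (d - 1) := by
    nth_rewrite 1 [← Complex.cpow_one S]
    rw [← Complex.cpow_add _ _ hS]
    congr 1
    ring
  have h2 : C ^ (-(d - 2)) * C ^ (1 + 2 * a + d)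
      = C ^ (((3 : ℕ) : ℂ) + 2 * a) := by
    rw [← Complex.cpow_add _ _ hC]
    congr 1
    push_cast
    ring
  have h3 : C ^ (((3 : ℕ) : ℂ) + 2 * a) = C ^ (3 : ℕ) * C ^ (2 * a) := by
    rw [Complex.cpow_add _ _ hC, Complex.cpow_natCast]
  calc (2 * S * ((C ^ (3 : ℕ))⁻¹)) * (S ^ (d - 2) * C ^ (-(d - 2)) *
        C ^ (1 + 2 * a + d))
      = 2 * (S * S ^ (d - 2)) * ((C ^ (3 : ℕ))⁻¹ *
        (C ^ (-(d - 2)) * C ^ (1 + 2 * a + d))) := by ring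
    _ = 2 * S ^ (d - 1) * ((C ^ (3 : ℕ))⁻¹ * (C ^ (3 : ℕ) * C ^ (2 * a))) := by
        rw [h1, h2, h3]
    _ = 2 * (C ^ (2 * a) * S ^ (d - 1)) := by
        field_simp

theorem integral_cosh_cpow_mul_sinh_cpow (d a : ℂ) (hd : 0 < d.re)
    (ha : a.re < (1 - d.re) / 2) :
    ∫ t in Set.Ioi (0 : ℝ),
        ((Real.cosh t : ℝ) : ℂ) ^ (2 * a) * ((Real.sinh t : ℝ) : ℂ) ^ (d - 1) =
      Complex.Gamma (d / 2) * Complex.Gamma (1 / 2 - a - d / 2) /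
        (2 * Complex.Gamma (1 / 2 - a)) := by
  -- notation
  set u : ℂ := d / 2 with hu_def
  set v : ℂ := 1 / 2 - a - d / 2 with hv_def
  have hu : 0 < u.re := by
    simp only [hu_def, Complex.div_re]
    simp [Complex.normSq]
    nlinarith [hd]
  have hv : 0 < v.re := by
    simp only [hv_def, Complex.sub_re, Complex.div_re]
    simp [Complex.normSq, Complex.one_re]
    nlinarith [ha]
  have huv : u + v = 1 / 2 - a := by rw [hu_def, hv_def]; ring
  have hw : 0 < (1 / 2 - a : ℂ).re := by
    rw [← huv]
    simp only [Complex.add_re]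
    linarith
  -- the substitution map
  set f : ℝ → ℝ := fun t => Real.sinh t ^ 2 / Real.cosh t ^ 2 with hf_def
  set f' : ℝ → ℝ := fun t => 2 * Real.sinh t / Real.cosh t ^ 3 with hf'_def
  set g : ℝ → ℂ := fun x => (x : ℂ) ^ (u - 1) * (1 - (x : ℂ)) ^ (v - 1) with hg_def
  have hfeq : ∀ x : ℝ, f x = 1 - (Real.cosh x ^ 2)⁻¹ := by
    intro x
    have hc : Real.cosh x ≠ 0 := (Real.cosh_pos x).ne'
    rw [hf_def]
    simp only
    rw [Real.sinh_sq]
    field_simp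
  -- derivative
  have hder : ∀ t ∈ Set.Ioi (0 : ℝ), HasDerivWithinAt f (f' t) (Set.Ioi 0) t := by
    intro t _
    have hc : Real.cosh t ≠ 0 := (Real.cosh_pos t).ne'
    have h1 : HasDerivAt (fun t => Real.sinh t ^ 2)
        (2 * Real.sinh t * Real.cosh t) t := by
      have := ((Real.hasDerivAt_sinh t).pow 2)
      simpa [Pi.pow_def, mul_comm, mul_assoc, mul_left_comm] using this
    have h2 : HasDerivAt (fun t => Real.cosh t ^ 2)
        (2 * Real.cosh t * Real.sinh t) t := by
      have := ((Real.hasDerivAt_cosh t).pow 2)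
      simpa [Pi.pow_def, mul_comm, mul_assoc, mul_left_comm] using this
    have h3 := h1.div h2 (pow_ne_zero 2 hc)
    have heq : (2 * Real.sinh t * Real.cosh t * Real.cosh t ^ 2 -
        Real.sinh t ^ 2 * (2 * Real.cosh t * Real.sinh t)) / (Real.cosh t ^ 2) ^ 2
        = f' t := by
      rw [hf'_def]
      simp only
      rw [Real.sinh_sq]
      field_simp
      ring
    rw [heq] at h3
    exact h3.hasDerivWithinAt
  -- injectivity
  have hinj : Set.InjOn f (Set.Ioi 0) := by
    apply StrictMonoOn.injOn
    intro s hs t ht hst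
    have hs' : (0 : ℝ) < s := hs
    have ht' : (0 : ℝ) < t := ht
    have hcs : Real.cosh s < Real.cosh t := by
      rw [Real.cosh_lt_cosh, abs_of_pos hs', abs_of_pos ht']
      exact hst
    have hcs2 : Real.cosh s ^ 2 < Real.cosh t ^ 2 := by
      have := Real.cosh_pos (x := s)
      nlinarith
    rw [hfeq, hfeq]
    have h1 : (Real.cosh t ^ 2)⁻¹ < (Real.cosh s ^ 2)⁻¹ := by
      apply inv_strictAnti₀
      · positivity
      · exact hcs2
    linarith
  -- image
  have himg : f '' Set.Ioi 0 = Set.Ioo (0 : ℝ) 1 := by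
    ext y
    constructor
    · rintro ⟨t, ht, rfl⟩
      have ht' : (0 : ℝ) < t := ht
      have hsp : 0 < Real.sinh t := Real.sinh_pos_iff.2 ht'
      have hcp : 0 < Real.cosh t := Real.cosh_pos t
      constructor
      · rw [hf_def]; positivity
      · rw [hfeq]
        have : 0 < (Real.cosh t ^ 2)⁻¹ := by positivity
        linarith
    · rintro ⟨hy0, hy1⟩
      have h1y : 0 < 1 - y := by linarith
      have hyy : 0 < y / (1 - y) := div_pos hy0 h1y
      refine ⟨Real.arsinh (Real.sqrt (y / (1 - y))), ?_, ?_⟩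
      · exact Real.arsinh_pos_iff.2 (Real.sqrt_pos.2 hyy)
      · rw [hf_def]
        simp only
        rw [Real.sinh_arsinh, Real.sq_sqrt hyy.le, Real.cosh_sq, Real.sinh_arsinh,
          Real.sq_sqrt hyy.le]
        field_simp
        ring
  -- change of variables
  have hsub := MeasureTheory.integral_image_eq_integral_abs_deriv_smul
    measurableSet_Ioi hder hinj g
  rw [himg] at hsub
  -- pointwise identification of the transformed integrand
  have hpt : ∀ t ∈ Set.Ioi (0 : ℝ),
      |f' t| • g (f t) = 2 * (((Real.cosh t : ℝ) : ℂ) ^ (2 * a) *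
        ((Real.sinh t : ℝ) : ℂ) ^ (d - 1)) := by
    intro t ht
    have ht' : (0 : ℝ) < t := ht
    have hS : 0 < Real.sinh t := Real.sinh_pos_iff.2 ht'
    have hC : 0 < Real.cosh t := Real.cosh_pos t
    have hS0 : ((Real.sinh t : ℝ) : ℂ) ≠ 0 := Complex.ofReal_ne_zero.2 hS.ne'
    have hC0 : ((Real.cosh t : ℝ) : ℂ) ≠ 0 := Complex.ofReal_ne_zero.2 hC.ne'
    have habs : |f' t| = 2 * Real.sinh t / Real.cosh t ^ 3 := by
      rw [hf'_def]
      exact abs_of_pos (by positivity)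
    have hone : (1 : ℂ) - ((f t : ℝ) : ℂ) = (((Real.cosh t ^ 2)⁻¹ : ℝ) : ℂ) := by
      rw [hfeq]
      push_cast
      ring
    have hft : ((f t : ℝ) : ℂ) = (((Real.sinh t / Real.cosh t) ^ 2 : ℝ) : ℂ) := by
      rw [hf_def]
      push_cast
      ring
    rw [Complex.real_smul, habs, hg_def]
    simp only
    rw [hone, hft, aux_sq_cpow (div_pos hS hC) (u - 1),
      aux_div_cpow hS hC (2 * (u - 1)),
      aux_inv_cpow (by positivity : (0:ℝ) < Real.cosh t ^ 2) (v - 1),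
      aux_sq_cpow (Real.cosh_pos t) (-(v - 1))]
    have hcast : ((2 * Real.sinh t / Real.cosh t ^ 3 : ℝ) : ℂ)
        = 2 * ((Real.sinh t : ℝ) : ℂ) * ((((Real.cosh t : ℝ) : ℂ)) ^ (3 : ℕ))⁻¹ := by
      push_cast
      ring
    rw [hcast]
    have hexp1 : 2 * (u - 1) = d - 2 := by rw [hu_def]; ring
    have hexp3 : 2 * -(v - 1) = 1 + 2 * a + d := by rw [hv_def]; ring
    rw [hexp1, hexp3]
    exact aux_cpow_arith hS0 hC0 d a
  have hcongr : ∫ t in Set.Ioi (0 : ℝ), |f' t| • g (f t)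
      = ∫ t in Set.Ioi (0 : ℝ), 2 * (((Real.cosh t : ℝ) : ℂ) ^ (2 * a) *
        ((Real.sinh t : ℝ) : ℂ) ^ (d - 1)) :=
    setIntegral_congr_fun measurableSet_Ioi hpt
  -- Beta integral as an integral over Ioo 0 1
  have hbeta : Complex.betaIntegral u v = ∫ x in Set.Ioo (0 : ℝ) 1, g x := by
    rw [Complex.betaIntegral, intervalIntegral.integral_of_le zero_le_one,
      integral_Ioc_eq_integral_Ioo]
  -- put it together
  have hkey : Complex.betaIntegral u v
      = 2 * ∫ t in Set.Ioi (0 : ℝ), ((Real.cosh t : ℝ) : ℂ) ^ (2 * a) *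
        ((Real.sinh t : ℝ) : ℂ) ^ (d - 1) := by
    rw [hbeta, hsub, hcongr, integral_const_mul]
  have hΓ : Complex.Gamma (1 / 2 - a) ≠ 0 := Complex.Gamma_ne_zero_of_re_pos hw
  have hGG : Complex.Gamma u * Complex.Gamma v
      = Complex.Gamma (1 / 2 - a) * Complex.betaIntegral u v := by
    rw [← huv]
    exact Complex.Gamma_mul_Gamma_eq_betaIntegral hu hv
  have : Complex.Gamma u * Complex.Gamma v / (2 * Complex.Gamma (1 / 2 - a))
      = ∫ t in Set.Ioi (0 : ℝ), ((Real.cosh t : ℝ) : ℂ) ^ (2 * a) *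
        ((Real.sinh t : ℝ) : ℂ) ^ (d - 1) := by
    rw [hGG, hkey]
    have h2Γ : (2 : ℂ) * Complex.Gamma (1 / 2 - a) ≠ 0 := mul_ne_zero two_ne_zero hΓ
    rw [show Complex.Gamma (1 / 2 - a) * (2 * ∫ t in Set.Ioi (0 : ℝ),
        ((Real.cosh t : ℝ) : ℂ) ^ (2 * a) * ((Real.sinh t : ℝ) : ℂ) ^ (d - 1))
      = (2 * Complex.Gamma (1 / 2 - a)) * ∫ t in Set.Ioi (0 : ℝ),
        ((Real.cosh t : ℝ) : ℂ) ^ (2 * a) * ((Real.sinh t : ℝ) : ℂ) ^ (d - 1) from by ring,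
      mul_div_cancel_left₀ _ h2Γ]
  rw [← this]
end

section
/- Let μ, λ be complex numbers with Re λ > −1 and Re(μ+λ) < 0, and let z be a real number with 1 < z < 3. Then ∫_1^z (z−y)^{−μ−λ−1} (y²−1)^λ dy = 2^λ Γ(λ+1) Γ(−μ−λ) (z−1)^{−μ} · ∑_{n=0}^∞ ((z−1)/2)^n · Γ(λ+n+1) / ( Γ(λ−n+1) Γ(1−μ+n) n! ), where 1/Γ(λ−n+1) and 1/Γ(1−μ+n) denote the entire reciprocal Gamma function and the series converges absolutely. -/
open MeasureTheory Finset

noncomputable def fise_cc (lam : ℂ) (n : ℕ) : ℂ :=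
  (∏ i ∈ Finset.range n, (lam - i)) / n.factorial

noncomputable def fise_bb (M : ℝ) (n : ℕ) : ℝ :=
  (∏ i ∈ Finset.range n, (M + i)) / n.factorial

lemma fise_bb_pos {M : ℝ} (hM : 0 < M) (n : ℕ) : 0 < fise_bb M n := by
  apply div_pos
  · exact Finset.prod_pos fun i _ => by positivity
  · exact_mod_cast n.factorial_pos

lemma fise_bb_succ (M : ℝ) (n : ℕ) :
    fise_bb M (n + 1) = fise_bb M n * ((M + n) / (n + 1)) := by
  unfold fise_bb
  rw [Finset.prod_range_succ, Nat.factorial_succ]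
  have h2 : ((n.factorial : ℝ)) ≠ 0 := by exact_mod_cast n.factorial_ne_zero
  push_cast
  rw [div_mul_div_comm, div_eq_div_iff (by positivity) (by positivity)]
  ring

lemma fise_norm_cc_le (lam : ℂ) (n : ℕ) : ‖fise_cc lam n‖ ≤ fise_bb (‖lam‖ + 1) n := by
  unfold fise_cc fise_bb
  rw [norm_div, Complex.norm_natCast]
  have hfac : (0:ℝ) < n.factorial := by exact_mod_cast n.factorial_pos
  apply div_le_div_of_nonneg_right ?_ hfac.le
  calc ‖∏ i ∈ Finset.range n, (lam - i)‖ = ∏ i ∈ Finset.range n, ‖lam - (i:ℂ)‖ := by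
        rw [norm_prod]
    _ ≤ ∏ i ∈ Finset.range n, (‖lam‖ + 1 + i) := by
        apply Finset.prod_le_prod (fun i _ => norm_nonneg _)
        intro i _
        calc ‖lam - (i : ℂ)‖ ≤ ‖lam‖ + ‖(i : ℂ)‖ := norm_sub_le _ _
          _ ≤ ‖lam‖ + 1 + i := by rw [Complex.norm_natCast]; linarith

lemma fise_cc_succ (lam : ℂ) (n : ℕ) :
    (n + 1 : ℂ) * fise_cc lam (n + 1) = (lam - n) * fise_cc lam n := by
  unfold fise_cc
  rw [Finset.prod_range_succ, Nat.factorial_succ]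
  have h1 : ((n : ℂ) + 1) ≠ 0 := Nat.cast_add_one_ne_zero n
  have h2 : ((n.factorial : ℂ)) ≠ 0 := by
    exact_mod_cast Nat.cast_ne_zero.mpr n.factorial_ne_zero
  push_cast
  field_simp

/-- Summability of `(n+1) * bb M (n+1) * r^n` for `0 < r < 1`. -/
lemma fise_summable_aux {M r : ℝ} (hM : 0 < M) (hr0 : 0 < r) (hr1 : r < 1) :
    Summable (fun n : ℕ => (n + 1 : ℝ) * fise_bb M (n + 1) * r ^ n) := by
  set f : ℕ → ℝ := fun n => (n + 1 : ℝ) * fise_bb M (n + 1) * r ^ n with hf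
  have hfpos : ∀ n, 0 < f n := fun n => by
    have := fise_bb_pos hM (n + 1); positivity
  apply summable_of_ratio_test_tendsto_lt_one hr1
  · filter_upwards with n; exact (hfpos n).ne'
  · have key : ∀ n : ℕ, ‖f (n + 1)‖ / ‖f n‖ = r * ((M + (n+1)) / (n + 1)) := by
      intro n
      rw [Real.norm_of_nonneg (hfpos _).le, Real.norm_of_nonneg (hfpos _).le, hf]
      simp only
      rw [fise_bb_succ M (n+1)]
      have h1 : (0:ℝ) < (n:ℝ) + 1 := by positivity
      have h2 : (0:ℝ) < (n:ℝ) + 2 := by positivity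
      have h3 := (fise_bb_pos hM (n+1)).ne'
      push_cast
      field_simp
      ring
    simp_rw [key]
    have h2 : Filter.Tendsto (fun n : ℕ => (M + ((n:ℝ)+1)) / ((n:ℝ)+1)) Filter.atTop (nhds 1) := by
      have h : ∀ n : ℕ, (M + ((n:ℝ)+1)) / ((n:ℝ)+1) = 1 + M * (1 / ((n:ℝ)+1)) := by
        intro n
        have : (0:ℝ) < (n:ℝ) + 1 := by positivity
        field_simp
        ring
      simp_rw [h]
      have := tendsto_one_div_add_atTop_nhds_zero_nat (𝕜 := ℝ)
      simpa using (tendsto_const_nhds.add (this.const_mul M))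
    have := (tendsto_const_nhds (x := r)).mul h2
    simpa using this

lemma fise_summable_bb {M r : ℝ} (hM : 0 < M) (hr0 : 0 ≤ r) (hr1 : r < 1) :
    Summable (fun n : ℕ => fise_bb M n * r ^ n) := by
  rcases eq_or_lt_of_le hr0 with h | h
  · apply summable_of_ne_finset_zero (s := {0})
    intro n hn
    simp only [Finset.mem_singleton] at hn
    rw [← h, zero_pow hn, mul_zero]
  · rw [← summable_nat_add_iff 1]
    refine Summable.of_nonneg_of_le
      (fun n : ℕ => by have := fise_bb_pos hM (n+1); positivity) (fun n : ℕ => ?_)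
      ((fise_summable_aux hM h hr1).mul_left r)
    · 
      have hb := fise_bb_pos hM (n + 1)
      have h1 : (1:ℝ) ≤ (n:ℝ) + 1 := by linarith [Nat.cast_nonneg (α := ℝ) n]
      calc fise_bb M (n+1) * r ^ (n+1)
          = 1 * fise_bb M (n+1) * (r ^ n * r) := by ring
        _ ≤ ((n:ℝ) + 1) * fise_bb M (n+1) * (r ^ n * r) := by
            apply mul_le_mul_of_nonneg_right ?_ (by positivity)
            exact mul_le_mul_of_nonneg_right h1 hb.le
        _ = r * (((n:ℝ) + 1) * fise_bb M (n + 1) * r ^ n) := by ring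


set_option maxHeartbeats 1000000 in
lemma fise_binom_hasSum (lam : ℂ) {w : ℝ} (h0 : 0 ≤ w) (h1 : w < 1) :
    HasSum (fun n : ℕ => fise_cc lam n * (w : ℂ) ^ n) ((1 + (w : ℂ)) ^ lam) := by
  set M : ℝ := ‖lam‖ + 1 with hM
  have hMpos : 0 < M := by positivity
  set r : ℝ := (w + 1) / 2 with hr
  have hr0 : 0 < r := by rw [hr]; linarith
  have hr1 : r < 1 := by rw [hr]; linarith
  have hwr : w < r := by rw [hr]; linarith
  set t : Set ℝ := Set.Ioo (-r) r with ht
  have hmem : ∀ y ∈ t, (0:ℝ) < 1 + y := by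
    rintro y ⟨hy1, hy2⟩; linarith
  set g : ℕ → ℝ → ℂ := fun n y => fise_cc lam n * (y : ℂ) ^ n with hg_def
  set g' : ℕ → ℝ → ℂ := fun n y => fise_cc lam n * (n * (y : ℂ) ^ (n - 1)) with hg'_def
  set u : ℕ → ℝ := fun n => if n = 0 then 0 else n * fise_bb M n * r ^ (n - 1) with hu_def
  have hu : Summable u := by
    rw [← summable_nat_add_iff 1]
    have : ∀ n : ℕ, u (n + 1) = ((n:ℝ) + 1) * fise_bb M (n + 1) * r ^ n := by
      intro n; simp only [hu_def, Nat.add_sub_cancel, Nat.succ_ne_zero, if_false]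
      push_cast; ring
    rw [funext this]
    exact fise_summable_aux hMpos hr0 hr1
  have hg : ∀ (n : ℕ) (y : ℝ), HasDerivAt (g n) (g' n y) y := by
    intro n y
    have h := ((hasDerivAt_pow n ((y : ℝ) : ℂ)).const_mul (fise_cc lam n)).comp_ofReal
    simpa [hg_def, hg'_def, mul_assoc] using h
  have hbound : ∀ (n : ℕ) (y : ℝ), y ∈ t → ‖g' n y‖ ≤ u n := by
    intro n y hy
    rcases n with _ | m
    · simp [hg'_def, hu_def]
    · simp only [hg'_def, hu_def, Nat.succ_ne_zero, if_false, Nat.add_sub_cancel]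
      rw [norm_mul, norm_mul, norm_pow, Complex.norm_natCast, Complex.norm_real]
      have hyr : ‖y‖ ≤ r := by
        rw [Real.norm_eq_abs, abs_le]
        exact ⟨(hy.1).le, (hy.2).le⟩
      have : ‖y‖ ^ m ≤ r ^ m := pow_le_pow_left₀ (norm_nonneg _) hyr m
      have hcc := fise_norm_cc_le lam (m + 1)
      push_cast
      have hb := (fise_bb_pos hMpos (m + 1)).le
      calc ‖fise_cc lam (m+1)‖ * (((m:ℝ)+1) * ‖y‖ ^ m)
          ≤ fise_bb M (m+1) * (((m:ℝ)+1) * r ^ m) := by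
            apply mul_le_mul hcc ?_ (by positivity) hb
            exact mul_le_mul_of_nonneg_left this (by positivity)
        _ = ((m:ℝ)+1) * fise_bb M (m+1) * r ^ m := by ring
  have h0t : (0:ℝ) ∈ t := ⟨by linarith, hr0⟩
  have hg0 : Summable fun n => g n 0 := by
    apply summable_of_ne_finset_zero (s := {0})
    intro n hn
    simp only [Finset.mem_singleton] at hn
    simp [hg_def, zero_pow hn]
  set F : ℝ → ℂ := fun y => ∑' n, g n y with hF_def
  have hF : ∀ y ∈ t, HasDerivAt F (∑' n, g' n y) y := by
    intro y hy
    exact hasDerivAt_tsum_of_isPreconnected hu isOpen_Ioo (convex_Ioo _ _).isPreconnected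
      (fun n y _ => hg n y) hbound h0t hg0 hy
  -- summability facts at each point of t
  have hSg : ∀ y ∈ t, Summable fun n => g n y := by
    intro y hy
    apply Summable.of_norm_bounded (fise_summable_bb hMpos hr0.le hr1)
    intro n
    rw [hg_def]
    simp only
    rw [norm_mul, norm_pow, Complex.norm_real]
    have hyr : ‖y‖ ≤ r := by
      rw [Real.norm_eq_abs, abs_le]; exact ⟨hy.1.le, hy.2.le⟩
    exact mul_le_mul (fise_norm_cc_le lam n)
      (pow_le_pow_left₀ (norm_nonneg _) hyr n) (by positivity)
      (fise_bb_pos hMpos n).le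
  have hSg' : ∀ y ∈ t, Summable fun n => g' n y := by
    intro y hy
    exact Summable.of_norm_bounded hu (fun n => hbound n y hy)
  -- the ODE : (1+y) * F' = lam * F on t
  have key : ∀ y ∈ t, (1 + (y:ℂ)) * (∑' n, g' n y) = lam * F y := by
    intro y hy
    have Sg := hSg y hy
    have Sg' := hSg' y hy
    have Sshift : Summable fun n => g' (n + 1) y := (summable_nat_add_iff 1).2 Sg'
    have eshift : ∀ n : ℕ, g' (n + 1) y = (lam - n) * g n y := by
      intro n
      simp only [hg'_def, hg_def, Nat.add_sub_cancel]
      push_cast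
      calc fise_cc lam (n+1) * (((n:ℂ)+1) * (y:ℂ) ^ n)
          = (((n:ℂ)+1) * fise_cc lam (n+1)) * (y:ℂ) ^ n := by ring
        _ = ((lam - n) * fise_cc lam n) * (y:ℂ) ^ n := by rw [fise_cc_succ]
        _ = (lam - n) * (fise_cc lam n * (y:ℂ) ^ n) := by ring
    have hA : ∑' n, g' n y = ∑' n, (lam - n) * g n y := by
      rw [Sg'.tsum_eq_zero_add]
      have : g' 0 y = 0 := by simp [hg'_def]
      rw [this, zero_add]
      exact tsum_congr eshift
    have hB : (y:ℂ) * ∑' n, g' n y = ∑' n : ℕ, (n:ℂ) * g n y := by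
      rw [← tsum_mul_left]
      apply tsum_congr
      intro n
      rcases n with _ | m
      · simp [hg'_def, hg_def]
      · simp only [hg'_def, hg_def, Nat.add_sub_cancel]
        push_cast
        rw [pow_succ]
        ring
    have hSA : Summable fun n => (lam - n) * g n y := by
      apply Summable.congr Sshift eshift
    have hSB : Summable fun n : ℕ => (n:ℂ) * g n y := by
      have := Sg'.mul_left (y:ℂ)
      apply Summable.congr this
      intro n
      rcases n with _ | m
      · simp [hg'_def, hg_def]
      · simp only [hg'_def, hg_def, Nat.add_sub_cancel]
        push_cast
        rw [pow_succ]
        ring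
    calc (1 + (y:ℂ)) * ∑' n, g' n y
        = ∑' n, g' n y + (y:ℂ) * ∑' n, g' n y := by ring
      _ = (∑' n, (lam - n) * g n y) + ∑' n : ℕ, (n:ℂ) * g n y := by rw [hB, hA]
      _ = ∑' n, ((lam - n) * g n y + (n:ℂ) * g n y) := (hSA.tsum_add hSB).symm
      _ = ∑' n, lam * g n y := by
          apply tsum_congr; intro n; ring
      _ = lam * F y := by rw [hF_def, tsum_mul_left]
  -- G has zero derivative on t
  set G : ℝ → ℂ := fun y => F y * (1 + (y:ℂ)) ^ (-lam) with hG_def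
  have hGd : ∀ y ∈ t, HasDerivAt G 0 y := by
    intro y hy
    have hpos := hmem y hy
    have hne : (1 + (y:ℂ)) ≠ 0 := by
      intro h
      have : ((1 + y : ℝ) : ℂ) = 0 := by push_cast; rw [← h]
      exact hpos.ne' (by exact_mod_cast this)
    have hslit : (1 + (y:ℂ)) ∈ Complex.slitPlane := by
      apply Complex.mem_slitPlane_iff.2
      left
      simpa using hpos
    have hlin : HasDerivAt (fun ζ : ℂ => 1 + ζ) 1 (y:ℂ) := by
      simpa using (hasDerivAt_id ((y:ℝ):ℂ)).const_add 1
    have hc : HasDerivAt (fun x : ℝ => (1 + (x:ℂ)) ^ (-lam))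
        (-lam * (1 + (y:ℂ)) ^ (-lam - 1)) y := by
      have := (hlin.cpow_const (c := -lam) hslit).comp_ofReal
      simpa using this
    have hprod := (hF y hy).mul hc
    refine hprod.congr_deriv (Eq.symm ?_)
    have hsplit : (1 + (y:ℂ)) ^ (-lam) = (1 + (y:ℂ)) * (1 + (y:ℂ)) ^ (-lam - 1) := by
      conv_lhs => rw [show -lam = 1 + (-lam - 1) by ring]
      rw [Complex.cpow_add _ _ hne, Complex.cpow_one]
    rw [hsplit]
    have hkey := key y hy
    generalize hS : (∑' n, g' n y) = S at hkey ⊢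
    generalize hFy : F y = Fy at hkey ⊢
    linear_combination (-((1 + (y:ℂ)) ^ (-lam - 1))) * hkey
  -- constancy on [0, w]
  have hsub : Set.Icc (0:ℝ) w ⊆ t := by
    intro y hy
    exact ⟨by linarith [hy.1], by linarith [hy.2]⟩
  have hcont : ContinuousOn G (Set.Icc 0 w) := fun y hy =>
    ((hGd y (hsub hy)).continuousAt).continuousWithinAt
  have hconst := constant_of_has_deriv_right_zero hcont
    (fun y hy => ((hGd y (hsub (Set.mem_Icc_of_Ico hy))).hasDerivWithinAt))
    w (Set.right_mem_Icc.2 h0)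
  -- G 0 = 1
  have hF0 : F 0 = 1 := by
    rw [hF_def]
    simp only
    rw [tsum_eq_single 0 (fun n hn => by simp [hg_def, zero_pow hn])]
    simp [hg_def, fise_cc]
  have hG0 : G 0 = 1 := by
    rw [hG_def]
    simp [hF0]
  rw [hG0] at hconst
  -- conclude
  have hne : (1 + (w:ℂ)) ≠ 0 := by
    intro h
    have : ((1 + w : ℝ) : ℂ) = 0 := by push_cast; rw [← h]
    have : (1:ℝ) + w = 0 := by exact_mod_cast this
    linarith
  have hcpne : (1 + (w:ℂ)) ^ lam ≠ 0 := by
    intro h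
    rcases (Complex.cpow_eq_zero_iff _ _).1 h with ⟨h1, _⟩
    exact hne h1
  have hFw : F w = (1 + (w:ℂ)) ^ lam := by
    have hGw : F w * (1 + (w:ℂ)) ^ (-lam) = 1 := by
      have := hconst
      rw [hG_def] at this
      simpa using this
    rw [Complex.cpow_neg] at hGw
    field_simp at hGw
    exact hGw
  have Sw : Summable fun n => fise_cc lam n * (w:ℂ) ^ n := by
    have := hSg w ⟨by linarith, hwr⟩
    simpa [hg_def] using this
  have := Sw.hasSum
  rw [show ∑' n, fise_cc lam n * (w:ℂ) ^ n = F w from rfl, hFw] at this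
  exact this


lemma fise_gamma_prod (lam : ℂ) (hlam : -1 < lam.re) (n : ℕ) :
    Complex.Gamma (lam + 1) * (Complex.Gamma (lam - n + 1))⁻¹ =
      ∏ i ∈ Finset.range n, (lam - i) := by
  induction n with
  | zero =>
    simp only [Nat.cast_zero, sub_zero, Finset.range_zero, Finset.prod_empty]
    exact mul_inv_cancel₀ (Complex.Gamma_ne_zero_of_re_pos (by simp; linarith))
  | succ n ih =>
    rw [Finset.prod_range_succ, ← ih]
    have harg : lam - (n + 1 : ℕ) + 1 = lam - n := by push_cast; ring
    rw [harg]
    suffices h : (Complex.Gamma (lam - n))⁻¹ = (Complex.Gamma (lam - n + 1))⁻¹ * (lam - n) by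
      rw [h]; ring
    by_cases hz : lam - (n:ℂ) = 0
    · rw [hz, Complex.Gamma_zero]
      simp
    · rw [Complex.Gamma_add_one _ hz, mul_inv, mul_comm (lam - (n:ℂ))⁻¹ _, mul_assoc,
        inv_mul_cancel₀ hz, mul_one]

lemma fise_intervalIntegrable (s tt : ℂ) (hs : -1 < s.re) (ht : -1 < tt.re) {p q : ℝ}
    (hpq : p < q) :
    IntervalIntegrable (fun y : ℝ => ((y - p : ℝ) : ℂ) ^ s * ((q - y : ℝ) : ℂ) ^ tt)
      volume p q := by
  set m := (p + q) / 2 with hm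
  have hpm : p < m := by rw [hm]; linarith
  have hmq : m < q := by rw [hm]; linarith
  have part1 : IntervalIntegrable (fun y : ℝ => ((y - p : ℝ) : ℂ) ^ s * ((q - y : ℝ) : ℂ) ^ tt)
      volume p m := by
    apply IntervalIntegrable.mul_continuousOn
    · have h := (intervalIntegral.intervalIntegrable_cpow' (a := 0) (b := m - p) hs).comp_sub_right p
      simpa using h
    · intro x hx
      rw [Set.uIcc_of_le hpm.le] at hx
      have hxq : (0:ℝ) < q - x := by
        have := hx.2; linarith
      apply ContinuousAt.continuousWithinAt
      apply ContinuousAt.cpow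
      · exact (Complex.continuous_ofReal.comp (continuous_const.sub continuous_id)).continuousAt
      · exact continuousAt_const
      · rw [Complex.mem_slitPlane_iff]
        left
        simpa using hxq
  have part2 : IntervalIntegrable (fun y : ℝ => ((y - p : ℝ) : ℂ) ^ s * ((q - y : ℝ) : ℂ) ^ tt)
      volume m q := by
    apply IntervalIntegrable.continuousOn_mul
    · have h := (intervalIntegral.intervalIntegrable_cpow' (a := q - m) (b := 0) ht).comp_sub_left q
      simpa using h
    · intro x hx
      rw [Set.uIcc_of_le hmq.le] at hx
      have hxp : (0:ℝ) < x - p := by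
        have := hx.1; linarith
      apply ContinuousAt.continuousWithinAt
      apply ContinuousAt.cpow
      · exact (Complex.continuous_ofReal.comp (continuous_id.sub continuous_const)).continuousAt
      · exact continuousAt_const
      · rw [Complex.mem_slitPlane_iff]
        left
        simpa using hxp
  exact part1.trans part2


set_option maxHeartbeats 1000000 in
theorem fractional_integral_series_expansion (μ lam : ℂ) (hlam : -1 < lam.re)
    (hμlam : (μ + lam).re < 0) (z : ℝ) (hz1 : 1 < z) (hz3 : z < 3) :
    (Summable fun n : ℕ =>
        ‖(((z - 1) / 2 : ℝ) : ℂ) ^ n * Complex.Gamma (lam + n + 1) *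
            (Complex.Gamma (lam - n + 1))⁻¹ * (Complex.Gamma (1 - μ + n))⁻¹ /
          (n.factorial : ℂ)‖) ∧
      (∫ y in (1 : ℝ)..z, ((z - y : ℝ) : ℂ) ^ (-μ - lam - 1) * ((y ^ 2 - 1 : ℝ) : ℂ) ^ lam) =
        (2 : ℂ) ^ lam * Complex.Gamma (lam + 1) * Complex.Gamma (-μ - lam) *
            ((z - 1 : ℝ) : ℂ) ^ (-μ) *
          ∑' n : ℕ,
            (((z - 1) / 2 : ℝ) : ℂ) ^ n * Complex.Gamma (lam + n + 1) *
                (Complex.Gamma (lam - n + 1))⁻¹ * (Complex.Gamma (1 - μ + n))⁻¹ /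
              (n.factorial : ℂ) := by
  have hz0 : (0:ℝ) < z - 1 := by linarith
  have hzc : ((z - 1 : ℝ) : ℂ) ≠ 0 := Complex.ofReal_ne_zero.mpr hz0.ne'
  have hmul : μ.re + lam.re < 0 := by simpa [Complex.add_re] using hμlam
  have ha_re : 0 < (-μ - lam).re := by
    simp only [Complex.sub_re, Complex.neg_re]
    linarith
  have ha1_re : -1 < (-μ - lam - 1).re := by
    simp only [Complex.sub_re, Complex.neg_re, Complex.one_re]
    linarith
  set M : ℝ := ‖lam‖ + 1 with hMdef
  have hM : 0 < M := by positivity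
  have hr0 : (0:ℝ) < (z - 1) / 2 := by linarith
  have hr1 : (z - 1) / 2 < 1 := by linarith
  set K : ℕ → ℂ := fun n => (2:ℂ) ^ lam * fise_cc lam n / (2:ℂ) ^ n with hKdef
  set FF : ℕ → ℝ → ℂ := fun n y =>
    K n * (((y - 1 : ℝ) : ℂ) ^ (lam + (n:ℂ)) * ((z - y : ℝ) : ℂ) ^ (-μ - lam - 1)) with hFFdef
  have h2lam : (2:ℂ) ^ lam ≠ 0 := by
    intro h
    rcases (Complex.cpow_eq_zero_iff _ _).1 h with ⟨h1, _⟩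
    norm_num at h1
  have h2n : ∀ n : ℕ, ((2:ℂ)) ^ n ≠ 0 := fun n => pow_ne_zero n two_ne_zero
  have hfac : ∀ n : ℕ, ((n.factorial : ℂ)) ≠ 0 := fun n => by
    exact_mod_cast Nat.cast_ne_zero.mpr n.factorial_ne_zero
  have hG1 : Complex.Gamma (lam + 1) ≠ 0 :=
    Complex.Gamma_ne_zero_of_re_pos (by simp only [Complex.add_re, Complex.one_re]; linarith)
  have hGa : Complex.Gamma (-μ - lam) ≠ 0 := Complex.Gamma_ne_zero_of_re_pos ha_re
  have hGμ : ∀ n : ℕ, Complex.Gamma (1 - μ + n) ≠ 0 := fun n => by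
    apply Complex.Gamma_ne_zero_of_re_pos
    simp only [Complex.add_re, Complex.sub_re, Complex.one_re, Complex.natCast_re]
    have : (0:ℝ) ≤ n := Nat.cast_nonneg n
    linarith
  -- integrability
  have hIIbase : ∀ n : ℕ, IntervalIntegrable
      (fun y : ℝ => ((y - 1 : ℝ) : ℂ) ^ (lam + (n:ℂ)) * ((z - y : ℝ) : ℂ) ^ (-μ - lam - 1))
      volume 1 z := by
    intro n
    apply fise_intervalIntegrable _ _ ?_ ha1_re hz1
    simp only [Complex.add_re, Complex.natCast_re]
    have : (0:ℝ) ≤ n := Nat.cast_nonneg n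
    linarith
  have hIIF : ∀ n : ℕ, IntervalIntegrable (FF n) volume 1 z := fun n =>
    (hIIbase n).const_mul (K n)
  have hIntF : ∀ n : ℕ, IntegrableOn (FF n) (Set.Ioc 1 z) := fun n => by
    have h := hIIF n
    rwa [intervalIntegrable_iff_integrableOn_Ioc_of_le hz1.le] at h
  set gC : ℝ → ℂ := fun y =>
    ((y - 1 : ℝ) : ℂ) ^ ((lam.re : ℂ)) * ((z - y : ℝ) : ℂ) ^ (-μ - lam - 1) with hgCdef
  have hIntg : IntegrableOn gC (Set.Ioc 1 z) := by
    have h := fise_intervalIntegrable ((lam.re : ℂ)) (-μ - lam - 1)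
      (by simpa using hlam) ha1_re hz1
    rwa [intervalIntegrable_iff_integrableOn_Ioc_of_le hz1.le] at h
  set C : ℝ := ∫ y in Set.Ioc 1 z, ‖gC y‖ with hCdef
  have hC0 : 0 ≤ C := integral_nonneg fun y => norm_nonneg _
  -- pointwise norm bound
  have hptbd : ∀ (n : ℕ), ∀ y ∈ Set.Ioc (1:ℝ) z,
      ‖FF n y‖ ≤ ‖K n‖ * (z - 1) ^ n * ‖gC y‖ := by
    intro n y hy
    have hy1 : (0:ℝ) < y - 1 := by linarith [hy.1]
    have hyz : y - 1 ≤ z - 1 := by linarith [hy.2]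
    rw [hFFdef, hgCdef]
    simp only
    rw [norm_mul, norm_mul, norm_mul]
    rw [Complex.norm_cpow_eq_rpow_re_of_pos hy1,
      Complex.norm_cpow_eq_rpow_re_of_pos hy1]
    simp only [Complex.add_re, Complex.natCast_re, Complex.ofReal_re]
    have hsplit : (y - 1) ^ (lam.re + (n:ℝ)) = (y - 1) ^ lam.re * (y - 1) ^ (n:ℕ) := by
      rw [Real.rpow_add hy1, Real.rpow_natCast]
    rw [hsplit]
    have hineq : (y - 1 : ℝ) ^ (n:ℕ) ≤ (z - 1) ^ n := pow_le_pow_left₀ hy1.le hyz n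
    have hnn : (0:ℝ) ≤ ‖((z - y : ℝ) : ℂ) ^ (-μ - lam - 1)‖ := norm_nonneg _
    have hrp : (0:ℝ) ≤ (y - 1) ^ lam.re := (Real.rpow_pos_of_pos hy1 _).le
    calc ‖K n‖ * ((y - 1) ^ lam.re * (y - 1) ^ (n:ℕ) * ‖((z - y : ℝ) : ℂ) ^ (-μ - lam - 1)‖)
        ≤ ‖K n‖ * ((y - 1) ^ lam.re * (z - 1) ^ n * ‖((z - y : ℝ) : ℂ) ^ (-μ - lam - 1)‖) := by
          apply mul_le_mul_of_nonneg_left ?_ (norm_nonneg _)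
          apply mul_le_mul_of_nonneg_right ?_ hnn
          exact mul_le_mul_of_nonneg_left hineq hrp
      _ = ‖K n‖ * (z - 1) ^ n * ((y - 1) ^ lam.re * ‖((z - y : ℝ) : ℂ) ^ (-μ - lam - 1)‖) := by
          ring
  -- integral norm bound
  have hbdd : ∀ n : ℕ, (∫ y in Set.Ioc 1 z, ‖FF n y‖) ≤ ‖K n‖ * (z - 1) ^ n * C := by
    intro n
    have heq : ‖K n‖ * (z - 1) ^ n * C
        = ∫ y in Set.Ioc 1 z, ‖K n‖ * (z - 1) ^ n * ‖gC y‖ := by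
      rw [hCdef, integral_const_mul]
    rw [heq]
    apply integral_mono_of_nonneg (ae_of_all _ fun y => norm_nonneg _)
      ((hIntg.norm.const_mul _))
    filter_upwards [ae_restrict_mem measurableSet_Ioc] with y hy using hptbd n y hy
  -- summability of integral norms
  have hKnorm : ∀ n : ℕ, ‖K n‖ * (z - 1) ^ n = ‖(2:ℂ) ^ lam‖ * ‖fise_cc lam n‖ * ((z-1)/2) ^ n := by
    intro n
    rw [hKdef]
    simp only
    rw [norm_div, norm_mul, norm_pow]
    simp only [Complex.norm_ofNat]
    rw [div_pow]
    have h2 : (0:ℝ) < 2 ^ n := by positivity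
    field_simp
  have hsumInt : Summable fun n : ℕ => ∫ y in Set.Ioc 1 z, ‖FF n y‖ := by
    refine Summable.of_nonneg_of_le
      (fun n => integral_nonneg fun y => norm_nonneg _) (fun n => ?_)
      (((fise_summable_bb hM hr0.le hr1)).mul_left (‖(2:ℂ) ^ lam‖ * C))
    refine (hbdd n).trans ?_
    rw [hKnorm n]
    have := fise_norm_cc_le lam n
    rw [hMdef]
    have h1 : (0:ℝ) ≤ ((z-1)/2) ^ n := by positivity
    calc ‖(2:ℂ) ^ lam‖ * ‖fise_cc lam n‖ * ((z-1)/2) ^ n * C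
        ≤ ‖(2:ℂ) ^ lam‖ * fise_bb (‖lam‖ + 1) n * ((z-1)/2) ^ n * C := by
          apply mul_le_mul_of_nonneg_right ?_ hC0
          apply mul_le_mul_of_nonneg_right ?_ h1
          exact mul_le_mul_of_nonneg_left this (norm_nonneg _)
      _ = ‖(2:ℂ) ^ lam‖ * C * (fise_bb (‖lam‖ + 1) n * ((z-1)/2) ^ n) := by ring
  -- interchange
  have hHasSum := MeasureTheory.hasSum_integral_of_summable_integral_norm
    (μ := volume.restrict (Set.Ioc 1 z)) (F := FF) hIntF hsumInt
  -- pointwise sum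
  have hpthas : ∀ y ∈ Set.Ioo (1:ℝ) z, HasSum (fun n => FF n y)
      (((z - y : ℝ) : ℂ) ^ (-μ - lam - 1) * ((y ^ 2 - 1 : ℝ) : ℂ) ^ lam) := by
    intro y hy
    obtain ⟨hy1, hy2⟩ := hy
    have hy1' : (0:ℝ) < y - 1 := by linarith
    have hyne : ((y - 1 : ℝ) : ℂ) ≠ 0 := Complex.ofReal_ne_zero.mpr hy1'.ne'
    have hw0 : (0:ℝ) ≤ (y - 1) / 2 := by linarith
    have hw1 : (y - 1) / 2 < 1 := by linarith
    have hbin := (fise_binom_hasSum lam hw0 hw1).mul_left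
      ((2:ℂ) ^ lam * ((y - 1 : ℝ) : ℂ) ^ lam * ((z - y : ℝ) : ℂ) ^ (-μ - lam - 1))
    have e1 : (fun n : ℕ => (2:ℂ) ^ lam * ((y - 1 : ℝ) : ℂ) ^ lam *
          ((z - y : ℝ) : ℂ) ^ (-μ - lam - 1) * (fise_cc lam n * (((y - 1) / 2 : ℝ) : ℂ) ^ n))
        = fun n => FF n y := by
      funext n
      rw [hFFdef]
      simp only
      have hsplit : ((y - 1 : ℝ) : ℂ) ^ (lam + (n:ℂ))
          = ((y - 1 : ℝ) : ℂ) ^ lam * ((y - 1 : ℝ) : ℂ) ^ (n:ℕ) := by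
        rw [Complex.cpow_add _ _ hyne, Complex.cpow_natCast]
      have hw : ((((y - 1) / 2 : ℝ)) : ℂ) = ((y - 1 : ℝ) : ℂ) / 2 := by push_cast; ring
      rw [hsplit, hw, div_pow, hKdef]
      simp only
      field_simp
    have e2 : (2:ℂ) ^ lam * ((y - 1 : ℝ) : ℂ) ^ lam * ((z - y : ℝ) : ℂ) ^ (-μ - lam - 1) *
          (1 + ((((y - 1) / 2 : ℝ)) : ℂ)) ^ lam
        = ((z - y : ℝ) : ℂ) ^ (-μ - lam - 1) * ((y ^ 2 - 1 : ℝ) : ℂ) ^ lam := by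
      have hbase : (1 + ((((y - 1) / 2 : ℝ)) : ℂ)) = (((y + 1) / 2 : ℝ) : ℂ) := by
        push_cast; ring
      rw [hbase]
      have h2 : (2:ℂ) ^ lam * (((y + 1) / 2 : ℝ) : ℂ) ^ lam = ((y + 1 : ℝ) : ℂ) ^ lam := by
        have hm := Complex.mul_cpow_ofReal_nonneg (a := 2) (b := (y + 1) / 2)
          (by norm_num) (by linarith) lam
        have hb : ((2:ℝ) : ℂ) * (((y + 1) / 2 : ℝ) : ℂ) = ((y + 1 : ℝ) : ℂ) := by
          push_cast; ring
        rw [hb] at hm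
        have h2c : ((2:ℝ) : ℂ) = (2:ℂ) := by norm_num
        rw [h2c] at hm
        exact hm.symm
      have h3 : ((y - 1 : ℝ) : ℂ) ^ lam * ((y + 1 : ℝ) : ℂ) ^ lam
          = ((y ^ 2 - 1 : ℝ) : ℂ) ^ lam := by
        rw [← Complex.mul_cpow_ofReal_nonneg (by linarith) (by linarith)]
        congr 1
        push_cast; ring
      calc (2:ℂ) ^ lam * ((y - 1 : ℝ) : ℂ) ^ lam * ((z - y : ℝ) : ℂ) ^ (-μ - lam - 1) *
            (((y + 1) / 2 : ℝ) : ℂ) ^ lam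
          = ((y - 1 : ℝ) : ℂ) ^ lam * ((2:ℂ) ^ lam * (((y + 1) / 2 : ℝ) : ℂ) ^ lam) *
            ((z - y : ℝ) : ℂ) ^ (-μ - lam - 1) := by ring
        _ = ((y - 1 : ℝ) : ℂ) ^ lam * ((y + 1 : ℝ) : ℂ) ^ lam *
            ((z - y : ℝ) : ℂ) ^ (-μ - lam - 1) := by rw [h2]
        _ = ((z - y : ℝ) : ℂ) ^ (-μ - lam - 1) * ((y ^ 2 - 1 : ℝ) : ℂ) ^ lam := by
            rw [h3]; ring
    rw [e1, e2] at hbin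
    exact hbin
  -- identification of the interval integral with the sum integral
  have hcongr : (∫ y in Set.Ioc 1 z, ∑' n, FF n y)
      = ∫ y in (1:ℝ)..z, ((z - y : ℝ) : ℂ) ^ (-μ - lam - 1) * ((y ^ 2 - 1 : ℝ) : ℂ) ^ lam := by
    rw [intervalIntegral.integral_of_le hz1.le, integral_Ioc_eq_integral_Ioo,
      integral_Ioc_eq_integral_Ioo]
    exact setIntegral_congr_fun measurableSet_Ioo fun y hy => (hpthas y hy).tsum_eq
  -- term integral evaluation
  have hT : ∀ n : ℕ, (∫ y in Set.Ioc 1 z, FF n y)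
      = ((2 : ℂ) ^ lam * Complex.Gamma (lam + 1) * Complex.Gamma (-μ - lam) *
          ((z - 1 : ℝ) : ℂ) ^ (-μ)) *
        ((((z - 1) / 2 : ℝ) : ℂ) ^ n * Complex.Gamma (lam + n + 1) *
            (Complex.Gamma (lam - n + 1))⁻¹ * (Complex.Gamma (1 - μ + n))⁻¹ /
          (n.factorial : ℂ)) := by
    intro n
    rw [← intervalIntegral.integral_of_le hz1.le]
    rw [hFFdef]
    simp only
    rw [intervalIntegral.integral_const_mul]
    -- change of variables
    have hcv : (∫ y in (1:ℝ)..z,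
          ((y - 1 : ℝ) : ℂ) ^ (lam + (n:ℂ)) * ((z - y : ℝ) : ℂ) ^ (-μ - lam - 1))
        = ∫ x in (0:ℝ)..(z-1),
          (x : ℂ) ^ (lam + (n:ℂ)) * (((z - 1 : ℝ) : ℂ) - (x:ℂ)) ^ (-μ - lam - 1) := by
      have h := intervalIntegral.integral_comp_sub_right (a := (1:ℝ)) (b := z)
        (fun x : ℝ => (x : ℂ) ^ (lam + (n:ℂ)) * (((z - 1 : ℝ) : ℂ) - (x:ℂ)) ^ (-μ - lam - 1)) 1
      rw [show (1:ℝ) - 1 = 0 from by ring] at h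
      rw [← h]
      apply intervalIntegral.integral_congr
      intro y hy
      simp only
      rw [show ((z - y : ℝ) : ℂ) = ((z - 1 : ℝ) : ℂ) - ((y - 1 : ℝ) : ℂ) from by push_cast; ring]
    rw [hcv]
    have hbs := Complex.betaIntegral_scaled (lam + (n:ℂ) + 1) (-μ - lam) hz0
    rw [show lam + (n:ℂ) + 1 - 1 = lam + (n:ℂ) from by ring] at hbs
    rw [hbs]
    -- evaluate beta
    have hs : 0 < (lam + (n:ℂ) + 1).re := by
      simp only [Complex.add_re, Complex.natCast_re, Complex.one_re]
      have : (0:ℝ) ≤ n := Nat.cast_nonneg n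
      linarith
    have hbeta := Complex.Gamma_mul_Gamma_eq_betaIntegral hs ha_re
    rw [show lam + (n:ℂ) + 1 + (-μ - lam) = 1 - μ + n from by ring] at hbeta
    have hbeta' : Complex.betaIntegral (lam + (n:ℂ) + 1) (-μ - lam)
        = Complex.Gamma (lam + n + 1) * Complex.Gamma (-μ - lam) *
          (Complex.Gamma (1 - μ + n))⁻¹ := by
      have hstep : Complex.betaIntegral (lam + (n:ℂ) + 1) (-μ - lam)
          = (Complex.Gamma (1 - μ + n))⁻¹ *
            (Complex.Gamma (1 - μ + n) * Complex.betaIntegral (lam + (n:ℂ) + 1) (-μ - lam)) :=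
        (inv_mul_cancel_left₀ (hGμ n) _).symm
      rw [hstep, ← hbeta]
      ring
    rw [hbeta']
    -- exponent split
    rw [show lam + (n:ℂ) + 1 + (-μ - lam) - 1 = -μ + (n:ℂ) from by ring,
      Complex.cpow_add _ _ hzc, Complex.cpow_natCast]
    -- final algebra
    have hGinv : (Complex.Gamma (lam - n + 1))⁻¹
        = fise_cc lam n * (n.factorial : ℂ) / Complex.Gamma (lam + 1) := by
      rw [eq_div_iff hG1, mul_comm, fise_gamma_prod lam hlam n, fise_cc,
        div_mul_cancel₀ _ (hfac n)]
    rw [hGinv, hKdef]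
    simp only
    have hw : ((((z - 1) / 2 : ℝ)) : ℂ) = ((z - 1 : ℝ) : ℂ) / 2 := by push_cast; ring
    rw [hw, div_pow]
    have c1 : Complex.Gamma (lam + 1) * (Complex.Gamma (lam + 1))⁻¹ = 1 := mul_inv_cancel₀ hG1
    have c2 : (n.factorial : ℂ) * ((n.factorial : ℂ))⁻¹ = 1 := mul_inv_cancel₀ (hfac n)
    linear_combination (-((2:ℂ)^lam * fise_cc lam n / 2^n * (((z-1:ℝ):ℂ)^(-μ) * ((z-1:ℝ):ℂ)^n *
        (Complex.Gamma (lam+(n:ℂ)+1) * Complex.Gamma (-μ-lam) *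
          (Complex.Gamma (1-μ+(n:ℂ)))⁻¹)))) * c1 -
      ((2:ℂ)^lam * fise_cc lam n / 2^n * (((z-1:ℝ):ℂ)^(-μ) * ((z-1:ℝ):ℂ)^n *
        (Complex.Gamma (lam+(n:ℂ)+1) * Complex.Gamma (-μ-lam) *
          (Complex.Gamma (1-μ+(n:ℂ)))⁻¹)) *
        (Complex.Gamma (lam+1) * (Complex.Gamma (lam+1))⁻¹)) * c2
  -- the prefactor is nonzero
  have hDne : ((2 : ℂ) ^ lam * Complex.Gamma (lam + 1) * Complex.Gamma (-μ - lam) *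
      ((z - 1 : ℝ) : ℂ) ^ (-μ)) ≠ 0 := by
    apply mul_ne_zero (mul_ne_zero (mul_ne_zero h2lam hG1) hGa)
    intro h
    rcases (Complex.cpow_eq_zero_iff _ _).1 h with ⟨h1, _⟩
    exact hzc h1
  constructor
  · -- summability of norms
    have hs1 : Summable fun n : ℕ => ‖∫ y in Set.Ioc 1 z, FF n y‖ :=
      Summable.of_nonneg_of_le (fun n => norm_nonneg _)
        (fun n => norm_integral_le_integral_norm _) hsumInt
    have he : (fun n : ℕ =>
        ‖(((z - 1) / 2 : ℝ) : ℂ) ^ n * Complex.Gamma (lam + n + 1) *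
            (Complex.Gamma (lam - n + 1))⁻¹ * (Complex.Gamma (1 - μ + n))⁻¹ /
          (n.factorial : ℂ)‖)
        = fun n : ℕ => ‖((2 : ℂ) ^ lam * Complex.Gamma (lam + 1) * Complex.Gamma (-μ - lam) *
            ((z - 1 : ℝ) : ℂ) ^ (-μ))‖⁻¹ * ‖∫ y in Set.Ioc 1 z, FF n y‖ := by
      funext n
      have hnorm : ‖∫ y in Set.Ioc 1 z, FF n y‖
          = ‖((2 : ℂ) ^ lam * Complex.Gamma (lam + 1) * Complex.Gamma (-μ - lam) *
            ((z - 1 : ℝ) : ℂ) ^ (-μ))‖ * ‖(((z - 1) / 2 : ℝ) : ℂ) ^ n *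
              Complex.Gamma (lam + n + 1) * (Complex.Gamma (lam - n + 1))⁻¹ *
              (Complex.Gamma (1 - μ + n))⁻¹ / (n.factorial : ℂ)‖ :=
        (congrArg norm (hT n)).trans (norm_mul _ _)
      rw [hnorm, inv_mul_cancel_left₀ (norm_ne_zero_iff.2 hDne)]
    rw [he]
    exact hs1.mul_left _
  · calc (∫ y in (1:ℝ)..z, ((z - y : ℝ) : ℂ) ^ (-μ - lam - 1) * ((y ^ 2 - 1 : ℝ) : ℂ) ^ lam)
        = ∫ y in Set.Ioc 1 z, ∑' n, FF n y := hcongr.symm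
      _ = ∑' n, ∫ y in Set.Ioc 1 z, FF n y := hHasSum.tsum_eq.symm
      _ = ∑' n : ℕ, ((2 : ℂ) ^ lam * Complex.Gamma (lam + 1) * Complex.Gamma (-μ - lam) *
            ((z - 1 : ℝ) : ℂ) ^ (-μ)) *
          ((((z - 1) / 2 : ℝ) : ℂ) ^ n * Complex.Gamma (lam + n + 1) *
              (Complex.Gamma (lam - n + 1))⁻¹ * (Complex.Gamma (1 - μ + n))⁻¹ /
            (n.factorial : ℂ)) := tsum_congr hT
      _ = _ := tsum_mul_left
end

section
/- Let z ≥ 1 be a real number and let c, ε be real numbers with ε > 0 and c + ε ≤ 0. Then ∫_0^∞ (z + cosh t)^{c} dt ≤ (2^ε / ε) · (z+1)^{c+ε}. -/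
open MeasureTheory

lemma integral_exp_neg_mul_Ioi_zero {ε : ℝ} (hε : 0 < ε) :
    ∫ t in Set.Ioi (0 : ℝ), Real.exp (-(ε * t)) = 1 / ε := by
  have := MeasureTheory.integral_comp_mul_left_Ioi (fun x => Real.exp (-x)) 0 hε
  simp only [mul_zero] at this
  rw [show (fun t => Real.exp (-(ε * t))) = (fun t => (fun x => Real.exp (-x)) (ε * t)) from rfl,
    this, integral_exp_neg_Ioi_zero, smul_eq_mul, mul_one, one_div]

theorem integral_cosh_rpow_bound (z c ε : ℝ) (hz : 1 ≤ z) (hε : 0 < ε) (hcε : c + ε ≤ 0) :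
    ∫ t in Set.Ioi (0 : ℝ), (z + Real.cosh t) ^ c ≤ 2 ^ ε / ε * (z + 1) ^ (c + ε) := by
  have hzpos : (0:ℝ) < z := lt_of_lt_of_le one_pos hz
  set g : ℝ → ℝ := fun t => (z + 1) ^ (c + ε) * (2 ^ ε * Real.exp (-(ε * t))) with hg
  have hgint : IntegrableOn g (Set.Ioi (0:ℝ)) := by
    apply Integrable.const_mul
    apply Integrable.const_mul
    simpa [neg_mul, IntegrableOn] using exp_neg_integrableOn_Ioi 0 hε
  have hbound : ∀ t ∈ Set.Ioi (0:ℝ), (z + Real.cosh t) ^ c ≤ g t := by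
    intro t _
    have hcosh : (0:ℝ) < Real.cosh t := Real.cosh_pos t
    have hpos : (0:ℝ) < z + Real.cosh t := by positivity
    have h1 : (z + Real.cosh t) ^ c
        = (z + Real.cosh t) ^ (c + ε) * (z + Real.cosh t) ^ (-ε) := by
      rw [← Real.rpow_add hpos]; ring_nf
    have h2 : (z + Real.cosh t) ^ (c + ε) ≤ (z + 1) ^ (c + ε) := by
      apply Real.rpow_le_rpow_of_nonpos (by linarith) _ hcε
      have := Real.one_le_cosh t
      linarith
    have h3 : (z + Real.cosh t) ^ (-ε) ≤ 2 ^ ε * Real.exp (-(ε * t)) := by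
      have hle : Real.exp t / 2 ≤ z + Real.cosh t := by
        have : Real.exp t / 2 ≤ Real.cosh t := by
          rw [Real.cosh_eq]
          have := Real.exp_pos (-t)
          linarith
        linarith
      have := Real.rpow_le_rpow_of_nonpos (by positivity : (0:ℝ) < Real.exp t / 2)
        hle (by linarith : -ε ≤ 0)
      calc (z + Real.cosh t) ^ (-ε) ≤ (Real.exp t / 2) ^ (-ε) := this
        _ = 2 ^ ε * Real.exp (-(ε * t)) := by
            rw [Real.div_rpow (Real.exp_pos t).le (by norm_num), div_eq_mul_inv,
              ← Real.rpow_neg (by norm_num), neg_neg, mul_comm,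
              ← Real.exp_mul]
            ring_nf
    calc (z + Real.cosh t) ^ c
        = (z + Real.cosh t) ^ (c + ε) * (z + Real.cosh t) ^ (-ε) := h1
      _ ≤ (z + 1) ^ (c + ε) * (2 ^ ε * Real.exp (-(ε * t))) := by
          apply mul_le_mul h2 h3 (Real.rpow_nonneg hpos.le _)
            (Real.rpow_nonneg (by linarith) _)
  have hmono : ∫ t in Set.Ioi (0:ℝ), (z + Real.cosh t) ^ c ≤ ∫ t in Set.Ioi (0:ℝ), g t := by
    apply integral_mono_of_nonneg
    · exact Filter.Eventually.of_forall fun t => Real.rpow_nonneg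
        (by have := Real.cosh_pos t; linarith) _
    · exact hgint
    · exact (ae_restrict_iff' measurableSet_Ioi).mpr (Filter.Eventually.of_forall hbound)
  refine hmono.trans (le_of_eq ?_)
  rw [hg]
  rw [MeasureTheory.integral_const_mul, MeasureTheory.integral_const_mul,
    integral_exp_neg_mul_Ioi_zero hε]
  ring
end

section
/- Let d ≥ 2 be an integer, n ≥ 0 an integer, and α, β real numbers with 0 < β < α < (d−1)/2, with α, β and α+β−(d−1)/2 not integers, and with (d−1)/2 + 2n < α + β. Then A_n(α,β) > 0, where A_n(α,β) = [ 1 / ( n! · 4 · π^{(d+1)/2} · Γ((d−1)/2) · Γ(α+β−(d−1)/2−2n) · Γ(α+β−2n) · Γ(d−1+2n−α−β) ) ] · Γ(α−n) Γ(β−n) Γ(α+β−n) Γ((d−1)/2−α+n) Γ((d−1)/2−β+n) Γ((d−1)/2+n) · (−1)^n Γ(n + (d−1)/2 − α − β) / Γ(2n + (d−1)/2 − α − β). -/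
lemma gamma_ratio_pos (t : ℝ) (ht : ∀ j : ℤ, t ≠ j) :
    ∀ m : ℕ, (∀ k : ℕ, k < m → t + k < 0) →
    0 < (-1 : ℝ) ^ m * Real.Gamma t / Real.Gamma (t + m) := by
  have htne : Real.Gamma t ≠ 0 := by
    apply Real.Gamma_ne_zero
    intro m h
    exact ht (-(m : ℤ)) (by push_cast at h ⊢; linarith)
  intro m
  induction m with
  | zero =>
    intro _
    simp only [pow_zero, Nat.cast_zero, add_zero, one_mul]
    rw [div_self htne]
    norm_num
  | succ m ih =>
    intro hk
    have hne : t + (m : ℝ) ≠ 0 := by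
      intro h
      exact ht (-(m : ℤ)) (by push_cast; linarith)
    have hneg : t + (m : ℝ) < 0 := hk m (Nat.lt_succ_self m)
    have hrw : Real.Gamma (t + ((m + 1 : ℕ) : ℝ)) = (t + m) * Real.Gamma (t + m) := by
      have : (t : ℝ) + ((m + 1 : ℕ) : ℝ) = (t + m) + 1 := by push_cast; ring
      rw [this, Real.Gamma_add_one hne]
    rw [hrw]
    have ihp := ih (fun k hk' => hk k (hk'.trans (Nat.lt_succ_self m)))
    have h1 : (0 : ℝ) < (-1) / (t + m) := div_pos_of_neg_of_neg (by norm_num) hneg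
    have := mul_pos h1 ihp
    calc (0:ℝ) < (-1) / (t + m) * ((-1) ^ m * Real.Gamma t / Real.Gamma (t + m)) := this
      _ = (-1) ^ (m + 1) * Real.Gamma t / ((t + m) * Real.Gamma (t + m)) := by
          rw [pow_succ]; field_simp

theorem residue_coefficient_pos (d : ℕ) (hd : 2 ≤ d) (n : ℕ) (α β : ℝ)
    (hβ : 0 < β) (hβα : β < α) (hα : α < ((d : ℝ) - 1) / 2)
    (hαZ : ∀ m : ℤ, α ≠ m) (hβZ : ∀ m : ℤ, β ≠ m)
    (hαβZ : ∀ m : ℤ, α + β - ((d : ℝ) - 1) / 2 ≠ m)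
    (hn : ((d : ℝ) - 1) / 2 + 2 * n < α + β) :
    0 <
      1 / ((n.factorial : ℝ) * 4 * Real.pi ^ (((d : ℝ) + 1) / 2) *
            Real.Gamma (((d : ℝ) - 1) / 2) *
            Real.Gamma (α + β - ((d : ℝ) - 1) / 2 - 2 * n) * Real.Gamma (α + β - 2 * n) *
            Real.Gamma ((d : ℝ) - 1 + 2 * n - α - β)) *
        (Real.Gamma (α - n) * Real.Gamma (β - n) * Real.Gamma (α + β - n) *
          Real.Gamma (((d : ℝ) - 1) / 2 - α + n) * Real.Gamma (((d : ℝ) - 1) / 2 - β + n) *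
          Real.Gamma (((d : ℝ) - 1) / 2 + n)) *
        ((-1 : ℝ) ^ n * Real.Gamma (n + ((d : ℝ) - 1) / 2 - α - β) /
          Real.Gamma (2 * n + ((d : ℝ) - 1) / 2 - α - β)) := by
  have hd2 : (2 : ℝ) ≤ (d : ℝ) := by exact_mod_cast hd
  have hn0 : (0 : ℝ) ≤ (n : ℝ) := Nat.cast_nonneg n
  have hn2 : (n : ℝ) ≤ 2 * n := by linarith
  set μ : ℝ := ((d : ℝ) - 1) / 2 with hμdef
  have hμ : (1:ℝ)/2 ≤ μ := by rw [hμdef]; linarith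
  have G := fun {x : ℝ} (hx : 0 < x) => Real.Gamma_pos_of_pos hx
  -- denominator positivity
  have hP : 0 < (n.factorial : ℝ) * 4 * Real.pi ^ (((d : ℝ) + 1) / 2) *
      Real.Gamma μ * Real.Gamma (α + β - μ - 2 * n) * Real.Gamma (α + β - 2 * n) *
      Real.Gamma ((d : ℝ) - 1 + 2 * n - α - β) := by
    have h1 : (0:ℝ) < n.factorial := by exact_mod_cast n.factorial_pos
    have h2 : (0:ℝ) < Real.pi ^ (((d : ℝ) + 1) / 2) := Real.rpow_pos_of_pos Real.pi_pos _
    have h3 := G (show (0:ℝ) < μ by linarith)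
    have h4 := G (show (0:ℝ) < α + β - μ - 2 * n by linarith)
    have h5 := G (show (0:ℝ) < α + β - 2 * n by linarith)
    have h6 := G (show (0:ℝ) < (d : ℝ) - 1 + 2 * n - α - β by
      have : μ = ((d:ℝ)-1)/2 := hμdef
      linarith [hα, hβα])
    positivity
  have hQ : 0 < Real.Gamma (α - n) * Real.Gamma (β - n) * Real.Gamma (α + β - n) *
      Real.Gamma (μ - α + n) * Real.Gamma (μ - β + n) * Real.Gamma (μ + n) := by
    have h1 := G (show (0:ℝ) < α - n by linarith)
    have h2 := G (show (0:ℝ) < β - n by linarith)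
    have h3 := G (show (0:ℝ) < α + β - n by linarith)
    have h4 := G (show (0:ℝ) < μ - α + n by linarith)
    have h5 := G (show (0:ℝ) < μ - β + n by linarith)
    have h6 := G (show (0:ℝ) < μ + n by linarith)
    positivity
  have hR : 0 < (-1 : ℝ) ^ n * Real.Gamma ((n : ℝ) + μ - α - β) /
      Real.Gamma (2 * (n : ℝ) + μ - α - β) := by
    set t : ℝ := (n : ℝ) + μ - α - β with htdef
    have ht : ∀ j : ℤ, t ≠ j := by
      intro j h
      apply hαβZ ((n : ℤ) - j)
      rw [htdef] at h
      push_cast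
      linarith
    have hk : ∀ k : ℕ, k < n → t + k < 0 := by
      intro k hkn
      have : (k : ℝ) < n := by exact_mod_cast hkn
      rw [htdef]; linarith
    have := gamma_ratio_pos t ht n hk
    have heq : t + (n : ℝ) = 2 * (n : ℝ) + μ - α - β := by rw [htdef]; ring
    rwa [heq] at this
  exact mul_pos (mul_pos (one_div_pos.mpr hP) hQ) hR
end

section
/- Let v > 0 and let ν be a nonzero real number. Then ∫_1^{cosh v} (cosh v − y)^{−iν} (y²−1)^{−1/2+iν} dy = 2^{iν} Γ(1/2+iν) Γ(1−iν) · sin(νv) / (√π · ν). -/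
open MeasureTheory Set

noncomputable section LegendreAux

namespace LegAux

variable (E : ℝ)

/-- midpoint C = cosh v when E = exp v -/
def CC : ℝ := (E + E⁻¹)/2

def QQ (y : ℝ) : ℝ := 2 * CC E * y - y^2 - 1

def DD (c y : ℝ) : ℝ := y^2 - 1 + 2*c*(CC E - y)

def uu (c y : ℝ) : ℝ := (y^2 - 1)/DD E c y

variable {E}

lemma hEpos (hE : 1 < E) : 0 < E := lt_trans one_pos hE
lemma hEinv_lt_one (hE : 1 < E) : E⁻¹ < 1 := by
  rw [inv_lt_one_iff₀]; right; exact hE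
lemma hEinv_pos (hE : 1 < E) : 0 < E⁻¹ := inv_pos.2 (hEpos hE)
lemma one_lt_CC (hE : 1 < E) : 1 < CC E := by
  have h := hEpos hE
  have hinv : E * E⁻¹ = 1 := mul_inv_cancel₀ (ne_of_gt h)
  rw [CC, lt_div_iff₀ (by norm_num : (0:ℝ) < 2)]
  nlinarith [sq_nonneg (E - 1), mul_pos (sub_pos.2 hE) (inv_pos.2 h)]
lemma CC_lt_E (hE : 1 < E) : CC E < E := by
  have h := hEpos hE
  have h2 : E⁻¹ < E := lt_trans (hEinv_lt_one hE) hE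
  rw [CC]; linarith
lemma key_CE (hE : 1 < E) : 2 * CC E * E = E^2 + 1 := by
  have h := (hEpos hE).ne'
  rw [CC]; field_simp
lemma QQ_factor (hE : 1 < E) (y : ℝ) : QQ E y = (E - y) * (y - E⁻¹) := by
  have h := (hEpos hE).ne'
  have hk := key_CE hE
  have hinv : E * E⁻¹ = 1 := mul_inv_cancel₀ h
  rw [QQ]
  have hC : CC E = (E + E⁻¹)/2 := rfl
  rw [hC]; field_simp; ring
lemma QQ_pos (hE : 1 < E) {y : ℝ} (h1 : 1 ≤ y) (h2 : y ≤ CC E) : 0 < QQ E y := by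
  rw [QQ_factor hE]
  have := CC_lt_E hE
  have := hEinv_lt_one hE
  apply mul_pos <;> linarith
lemma DD_pos (hE : 1 < E) {c y : ℝ} (hc : 0 < c) (h1 : 1 ≤ y) (h2 : y ≤ CC E) :
    0 < DD E c y := by
  rcases eq_or_lt_of_le h1 with h | h
  · have : 1 < CC E := one_lt_CC hE
    rw [DD, ← h]; nlinarith
  · rw [DD]; nlinarith
lemma DD_at_inv (hE : 1 < E) (y : ℝ) : DD E E⁻¹ y = (y - E⁻¹)^2 := by
  have h := (hEpos hE).ne'
  have hk := key_CE hE
  have h2 : 2 * CC E * E⁻¹ = 1 + E⁻¹^2 := by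
    field_simp at *; nlinarith [hk]
  rw [DD]; nlinarith [h2]
lemma DD_at_E (hE : 1 < E) (y : ℝ) : DD E E y = (E - y)^2 := by
  have hk := key_CE hE
  rw [DD]; nlinarith [hk]
lemma DD_mono (hE : 1 < E) {c c' y : ℝ} (hcc : c ≤ c') (h2 : y ≤ CC E) :
    DD E c y ≤ DD E c' y := by
  rw [DD, DD]
  have : 2*c*(CC E - y) ≤ 2*c'*(CC E - y) := by nlinarith
  linarith
lemma DD_lower (hE : 1 < E) {c y : ℝ} (hc : E⁻¹ ≤ c) (h1 : 1 ≤ y) (h2 : y ≤ CC E) :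
    (1 - E⁻¹)^2 ≤ DD E c y := by
  have h3 := DD_at_inv hE y
  have h4 := DD_mono hE hc h2
  have h5 : (1 - E⁻¹)^2 ≤ (y - E⁻¹)^2 := by
    have := hEinv_lt_one hE; nlinarith
  linarith [h3 ▸ h4]
lemma uu_pos (hE : 1 < E) {c y : ℝ} (hc : 0 < c) (h1 : 1 < y) (h2 : y ≤ CC E) :
    0 < uu E c y :=
  div_pos (by nlinarith) (DD_pos hE hc h1.le h2)
lemma one_sub_uu (hE : 1 < E) {c y : ℝ} (hc : 0 < c) (h1 : 1 ≤ y) (h2 : y ≤ CC E) :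
    1 - uu E c y = 2*c*(CC E - y)/DD E c y := by
  have hD := (DD_pos hE hc h1 h2).ne'
  rw [uu, eq_div_iff hD, sub_mul, one_mul, div_mul_cancel₀ _ hD]
  rw [DD]; ring
lemma one_sub_uu_pos (hE : 1 < E) {c y : ℝ} (hc : 0 < c) (h1 : 1 ≤ y) (h2 : y < CC E) :
    0 < 1 - uu E c y := by
  rw [one_sub_uu hE hc h1 h2.le]
  apply div_pos (by nlinarith) (DD_pos hE hc h1 h2.le)
lemma uu_lt_one (hE : 1 < E) {c y : ℝ} (hc : 0 < c) (h1 : 1 ≤ y) (h2 : y < CC E) :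
    uu E c y < 1 := by linarith [one_sub_uu_pos hE hc h1 h2]
lemma uu_one (c : ℝ) : uu E c 1 = 0 := by simp [uu]
lemma uu_CC (hE : 1 < E) {c : ℝ} (hc : 0 < c) : uu E c (CC E) = 1 := by
  have h1 := one_lt_CC hE
  rw [uu, DD]; rw [div_eq_one_iff_eq] <;> nlinarith

lemma hasDerivAt_uu (hE : 1 < E) {c y : ℝ} (hc : 0 < c) (h1 : 1 ≤ y) (h2 : y ≤ CC E) :
    HasDerivAt (uu E c) (2*c*QQ E y/(DD E c y)^2) y := by
  have hD := DD_pos hE hc h1 h2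
  have hq : HasDerivAt (fun y : ℝ => y^2 - 1) (2*y) y := by
    simpa using ((hasDerivAt_pow 2 y).sub_const 1)
  have hd : HasDerivAt (DD E c) (2*y - 2*c) y := by
    unfold DD
    have h0 : HasDerivAt (fun y : ℝ => y^2 - 1 + 2*c*(CC E - y)) (2*y + 2*c*(0-1)) y :=
      hq.add (((hasDerivAt_const y (CC E)).sub (hasDerivAt_id y)).const_mul (2*c))
    convert h0 using 1; ring
  have := hq.div hd hD.ne'
  refine this.congr_deriv (Eq.symm ?_)
  have h2 : ((DD E c y)^2 : ℝ) ≠ 0 := (pow_pos hD 2).ne'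
  rw [div_eq_div_iff h2 h2, QQ, DD]; ring


lemma hasDerivAt_DD_c (hE : 1 < E) (y : ℝ) (c : ℝ) :
    HasDerivAt (fun c => DD E c y) (2*(CC E - y)) c := by
  unfold DD
  simpa using ((hasDerivAt_id c).const_mul 2 |>.mul_const (CC E - y)).const_add (y^2-1)

lemma continuousOn_DD_rpow (hE : 1 < E) {y : ℝ} (h1 : 1 ≤ y) (h2 : y ≤ CC E) (p : ℝ) :
    ContinuousOn (fun c => (DD E c y) ^ p) (Icc E⁻¹ E) := by
  apply ContinuousOn.rpow_const
  · exact (continuous_const.add ((continuous_const.mul continuous_id).mul continuous_const)).continuousOn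
  · intro c hc
    left
    exact (DD_pos hE (lt_of_lt_of_le (hEinv_pos hE) hc.1) h1 h2).ne'

lemma ftc_c_integral (hE : 1 < E) {y : ℝ} (h1 : 1 < y) (h2 : y < CC E) :
    ∫ c in E⁻¹..E, QQ E y * (DD E c y) ^ (-(3/2) : ℝ) = 2 := by
  have hCy : 0 < CC E - y := by linarith
  have hIE : E⁻¹ < E := lt_trans (hEinv_lt_one hE) hE
  set G : ℝ → ℝ := fun c => -(QQ E y/(CC E - y)) * (DD E c y) ^ (-(1/2) : ℝ) with hG
  have hderiv : ∀ c ∈ Set.uIcc E⁻¹ E,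
      HasDerivAt G (QQ E y * (DD E c y) ^ (-(3/2) : ℝ)) c := by
    intro c hc
    rw [Set.uIcc_of_le hIE.le] at hc
    have hcpos : 0 < c := lt_of_lt_of_le (hEinv_pos hE) hc.1
    have hD := DD_pos hE hcpos h1.le h2.le
    have h0 := (hasDerivAt_DD_c hE y c).rpow_const (p := -(1/2)) (Or.inl hD.ne')
    have h3 := h0.const_mul (-(QQ E y/(CC E - y)))
    refine h3.congr_deriv (Eq.symm ?_)
    rw [show (-(1/2) : ℝ) - 1 = -(3/2) by norm_num]
    field_simp
  have hint : IntervalIntegrable (fun c => QQ E y * (DD E c y) ^ (-(3/2) : ℝ))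
      MeasureTheory.volume E⁻¹ E := by
    apply ContinuousOn.intervalIntegrable
    rw [Set.uIcc_of_le hIE.le]
    exact (continuousOn_const.mul (continuousOn_DD_rpow hE h1.le h2.le _))
  rw [intervalIntegral.integral_eq_sub_of_hasDerivAt hderiv hint]
  have hEy : 0 < E - y := by linarith [CC_lt_E hE]
  have hyE : 0 < y - E⁻¹ := by linarith [hEinv_lt_one hE]
  have sq1 : (DD E E y) ^ (-(1/2) : ℝ) = (E - y)⁻¹ := by
    rw [DD_at_E hE y, ← Real.rpow_natCast (E - y) 2, ← Real.rpow_mul hEy.le]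
    norm_num [Real.rpow_neg_one]
  have sq2 : (DD E E⁻¹ y) ^ (-(1/2) : ℝ) = (y - E⁻¹)⁻¹ := by
    rw [DD_at_inv hE y, ← Real.rpow_natCast (y - E⁻¹) 2, ← Real.rpow_mul hyE.le]
    norm_num [Real.rpow_neg_one]
  rw [hG]
  simp only [sq1, sq2]
  have hC : CC E = (E + E⁻¹)/2 := rfl
  have e1 : QQ E y * (E - y)⁻¹ = y - E⁻¹ := by
    rw [QQ_factor hE, mul_comm (E-y) _, mul_assoc, mul_inv_cancel₀ hEy.ne', mul_one]
  have e2 : QQ E y * (y - E⁻¹)⁻¹ = E - y := by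
    rw [QQ_factor hE, mul_assoc, mul_inv_cancel₀ hyE.ne', mul_one]
  have hre : -(QQ E y/(CC E - y)) * (E-y)⁻¹ - -(QQ E y/(CC E - y)) * (y-E⁻¹)⁻¹
      = (QQ E y * (y-E⁻¹)⁻¹ - QQ E y * (E-y)⁻¹)/(CC E - y) := by ring
  rw [hre, e1, e2, div_eq_iff hCy.ne', hC]
  ring


lemma cpow_ofReal_ne_zero {x : ℝ} (hx : 0 < x) (w : ℂ) : (x:ℂ)^w ≠ 0 := by
  intro h
  rw [Complex.cpow_eq_zero_iff] at h
  exact_mod_cast hx.ne' (by exact_mod_cast h.1)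

lemma real_part_eq (hE : 1 < E) {c y : ℝ} (hc : 0 < c) (h1 : 1 < y) (h2 : y < CC E) :
    (c ^ ((-1:ℝ)) * (uu E c y ^ (-(1/2):ℝ)) * (2*c*QQ E y/(DD E c y)^2) : ℝ)
    = 2 * ((y^2-1) ^ (-(1/2):ℝ) * (QQ E y * (DD E c y) ^ (-(3/2):ℝ))) := by
  have hD := DD_pos hE hc h1.le h2.le
  have hy2 : 0 < y^2 - 1 := by nlinarith
  have hu_eq : uu E c y ^ (-(1/2):ℝ) = (y^2-1) ^ (-(1/2):ℝ) * DD E c y ^ ((1/2):ℝ) := by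
    rw [uu, Real.div_rpow hy2.le hD.le, Real.rpow_neg hD.le]
    rw [div_eq_mul_inv, inv_inv]
  have hD_eq : DD E c y ^ ((1/2):ℝ) = DD E c y ^ (-(3/2):ℝ) * DD E c y^2 := by
    rw [← Real.rpow_natCast (DD E c y) 2, ← Real.rpow_add hD]
    norm_num
  rw [Real.rpow_neg_one, hu_eq, hD_eq]
  field_simp

lemma pointwise_f (a : ℂ) (hE : 1 < E) {c y : ℝ} (hc : 0 < c) (h1 : 1 < y) (h2 : y < CC E) :
    (c:ℂ)^(a-1) * ((uu E c y :ℝ):ℂ)^(a-1/2) * ((1 - uu E c y:ℝ):ℂ)^(-a)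
       * ((2*c*QQ E y/(DD E c y)^2 : ℝ):ℂ)
    = (2:ℂ)^(1-a) * ((CC E - y:ℝ):ℂ)^(-a) * ((y^2-1:ℝ):ℂ)^(a-1/2)
       * ((QQ E y * (DD E c y)^(-(3/2):ℝ) : ℝ):ℂ) := by
  have hD := DD_pos hE hc h1.le h2.le
  have hu := uu_pos hE hc h1 h2.le
  have h1u := one_sub_uu_pos hE hc h1.le h2
  have hQ := QQ_pos hE h1.le h2.le
  have hCy : 0 < CC E - y := sub_pos.2 h2
  have hy2 : 0 < y^2 - 1 := by nlinarith
  set u := uu E c y with hu_def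
  set D := DD E c y with hD_def
  set Q := QQ E y with hQ_def
  have hc0 : (c:ℂ) ≠ 0 := by exact_mod_cast hc.ne'
  have hu0 : (u:ℂ) ≠ 0 := by exact_mod_cast hu.ne'
  have hy20 : ((y^2-1:ℝ):ℂ) ≠ 0 := by exact_mod_cast hy2.ne'
  -- splitting lemmas
  have hsp1 : (c:ℂ)^(a-1) = (c:ℂ)^a * ((c⁻¹:ℝ):ℂ) := by
    rw [show a-1 = a + (-1) by ring, Complex.cpow_add _ _ hc0, Complex.cpow_neg_one]
    push_cast; ring
  have hsp2 : ((u:ℝ):ℂ)^(a-1/2) = (u:ℂ)^a * ((u ^ (-(1/2):ℝ) : ℝ):ℂ) := by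
    rw [show a-1/2 = a + (-(1/2)) by ring, Complex.cpow_add _ _ hu0,
      Complex.ofReal_cpow hu.le]
    norm_num
  have hsp3 : ((y^2-1:ℝ):ℂ)^(a-1/2) = ((y^2-1:ℝ):ℂ)^a * (((y^2-1) ^ (-(1/2):ℝ) : ℝ):ℂ) := by
    rw [show a-1/2 = a + (-(1/2)) by ring, Complex.cpow_add _ _ hy20,
      Complex.ofReal_cpow hy2.le]
    norm_num
  have hsp4 : (2:ℂ)^(1-a) = 2 * (2:ℂ)^(-a) := by
    rw [show (1:ℂ)-a = -a + 1 by ring, Complex.cpow_add _ _ (by norm_num), Complex.cpow_one]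
    ring
  -- Fact 1 : purely imaginary part
  have key : (c*u*(2*(CC E - y)) : ℝ) = (1-u)*(y^2-1) := by
    rw [hu_def, one_sub_uu hE hc h1.le h2.le, uu]
    rw [← hD_def]
    field_simp
  have expand : (c:ℂ)^a * ((u:ℝ):ℂ)^a * ((2:ℂ)^a * ((CC E - y:ℝ):ℂ)^a)
      = ((1-u:ℝ):ℂ)^a * ((y^2-1:ℝ):ℂ)^a := by
    calc (c:ℂ)^a * ((u:ℝ):ℂ)^a * ((2:ℂ)^a * ((CC E - y:ℝ):ℂ)^a)
        = ((c*u:ℝ):ℂ)^a * ((2*(CC E - y):ℝ):ℂ)^a := by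
          rw [Complex.ofReal_mul, Complex.mul_cpow_ofReal_nonneg hc.le hu.le,
            Complex.ofReal_mul, Complex.mul_cpow_ofReal_nonneg (by norm_num : (0:ℝ) ≤ 2) hCy.le]
          push_cast
          ring
      _ = ((c*u*(2*(CC E - y)):ℝ):ℂ)^a := by
          rw [Complex.ofReal_mul (c*u), Complex.mul_cpow_ofReal_nonneg (by positivity) (by positivity)]
      _ = (((1-u)*(y^2-1):ℝ):ℂ)^a := by rw [key]
      _ = ((1-u:ℝ):ℂ)^a * ((y^2-1:ℝ):ℂ)^a := by
          rw [Complex.ofReal_mul, Complex.mul_cpow_ofReal_nonneg h1u.le hy2.le]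
  have fact1 : (c:ℂ)^a * ((u:ℝ):ℂ)^a * ((1-u:ℝ):ℂ)^(-a)
      = (2:ℂ)^(-a) * ((y^2-1:ℝ):ℂ)^a * ((CC E - y:ℝ):ℂ)^(-a) := by
    have n1 := cpow_ofReal_ne_zero h1u a
    have n2 : (2:ℂ)^a ≠ 0 := by
      intro h
      rw [Complex.cpow_eq_zero_iff] at h
      norm_num at h
    have n3 := cpow_ofReal_ne_zero hCy a
    rw [Complex.cpow_neg, Complex.cpow_neg, Complex.cpow_neg]
    push_cast at expand n1 n2 n3 ⊢
    field_simp
    linear_combination expand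
  -- Fact 2 : real part
  have fact2 : (c⁻¹ * (u ^ (-(1/2):ℝ)) * (2*c*Q/D^2) : ℝ)
      = 2 * ((y^2-1) ^ (-(1/2):ℝ) * (Q * D ^ (-(3/2):ℝ))) := by
    have := real_part_eq hE hc h1 h2
    rw [Real.rpow_neg_one] at this
    exact this
  calc (c:ℂ)^(a-1) * ((u:ℝ):ℂ)^(a-1/2) * ((1-u:ℝ):ℂ)^(-a) * ((2*c*Q/D^2 : ℝ):ℂ)
      = ((c:ℂ)^a * ((u:ℝ):ℂ)^a * ((1-u:ℝ):ℂ)^(-a))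
        * ((c⁻¹ * (u ^ (-(1/2):ℝ)) * (2*c*Q/D^2) : ℝ):ℂ) := by
        rw [hsp1, hsp2]; push_cast; ring
    _ = ((2:ℂ)^(-a) * ((y^2-1:ℝ):ℂ)^a * ((CC E - y:ℝ):ℂ)^(-a))
        * ((2 * ((y^2-1) ^ (-(1/2):ℝ) * (Q * D ^ (-(3/2):ℝ))) : ℝ):ℂ) := by
        rw [fact1, fact2]
    _ = (2:ℂ)^(1-a) * ((CC E - y:ℝ):ℂ)^(-a) * ((y^2-1:ℝ):ℂ)^(a-1/2)
        * ((Q * D^(-(3/2):ℝ) : ℝ):ℂ) := by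
        rw [hsp3, hsp4]; push_cast; ring


lemma step1 (a : ℂ) (hE : 1 < E) {y : ℝ} (h1 : 1 < y) (h2 : y < CC E) :
    (∫ c in E⁻¹..E, (c:ℂ)^(a-1) * ((uu E c y :ℝ):ℂ)^(a-1/2) * ((1 - uu E c y:ℝ):ℂ)^(-a)
        * ((2*c*QQ E y/(DD E c y)^2 : ℝ):ℂ))
    = (2:ℂ)^(2-a) * ((CC E - y:ℝ):ℂ)^(-a) * ((y^2-1:ℝ):ℂ)^(a-1/2) := by
  have hIE : E⁻¹ < E := lt_trans (hEinv_lt_one hE) hE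
  have hcongr : Set.EqOn
      (fun c : ℝ => (c:ℂ)^(a-1) * ((uu E c y :ℝ):ℂ)^(a-1/2) * ((1 - uu E c y:ℝ):ℂ)^(-a)
        * ((2*c*QQ E y/(DD E c y)^2 : ℝ):ℂ))
      (fun c : ℝ => (2:ℂ)^(1-a) * ((CC E - y:ℝ):ℂ)^(-a) * ((y^2-1:ℝ):ℂ)^(a-1/2)
        * ((QQ E y * (DD E c y)^(-(3/2):ℝ) : ℝ):ℂ))
      (Set.uIcc E⁻¹ E) := by
    intro c hc
    rw [Set.uIcc_of_le hIE.le] at hc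
    exact pointwise_f a hE (lt_of_lt_of_le (hEinv_pos hE) hc.1) h1 h2
  rw [intervalIntegral.integral_congr hcongr]
  rw [intervalIntegral.integral_const_mul]
  rw [intervalIntegral.integral_ofReal]
  rw [ftc_c_integral hE h1 h2]
  rw [show (2:ℂ)^(2-a) = (2:ℂ)^(1-a) * 2 by
    rw [show (2:ℂ)-a = (1-a) + 1 by ring, Complex.cpow_add _ _ (by norm_num), Complex.cpow_one]]
  push_cast
  ring


lemma continuousOn_uu (hE : 1 < E) {c : ℝ} (hc : 0 < c) :
    ContinuousOn (uu E c) (Icc 1 (CC E)) := by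
  apply ContinuousOn.div
  · exact (continuous_pow 2 |>.sub continuous_const).continuousOn
  · unfold DD; fun_prop
  · intro y hy
    exact (DD_pos hE hc hy.1 hy.2).ne'

lemma strictMonoOn_uu (hE : 1 < E) {c : ℝ} (hc : 0 < c) :
    StrictMonoOn (uu E c) (Icc 1 (CC E)) := by
  apply strictMonoOn_of_deriv_pos (convex_Icc _ _) (continuousOn_uu hE hc)
  intro y hy
  rw [interior_Icc] at hy
  rw [(hasDerivAt_uu hE hc hy.1.le hy.2.le).deriv]
  have hQ := QQ_pos hE hy.1.le hy.2.le
  have hD := DD_pos hE hc hy.1.le hy.2.le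
  positivity

lemma image_uu (hE : 1 < E) {c : ℝ} (hc : 0 < c) :
    uu E c '' Ioo 1 (CC E) = Ioo 0 1 := by
  apply Set.Subset.antisymm
  · rintro _ ⟨y, hy, rfl⟩
    exact ⟨uu_pos hE hc hy.1 hy.2.le, uu_lt_one hE hc hy.1.le hy.2⟩
  · have h := intermediate_value_Ioo (le_of_lt (one_lt_CC hE)) (continuousOn_uu hE hc)
    rw [uu_one, uu_CC hE hc] at h
    exact h

lemma step3 (a : ℂ) (hE : 1 < E) {c : ℝ} (hc : 0 < c) :
    (∫ y in Ioo (1:ℝ) (CC E), ((uu E c y :ℝ):ℂ)^(a-1/2) * ((1 - uu E c y:ℝ):ℂ)^(-a)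
      * ((2*c*QQ E y/(DD E c y)^2 : ℝ):ℂ))
    = Complex.betaIntegral (a + 1/2) (1 - a) := by
  have h1C := one_lt_CC hE
  have hder : ∀ y ∈ Ioo (1:ℝ) (CC E),
      HasDerivWithinAt (uu E c) (2*c*QQ E y/(DD E c y)^2) (Ioo (1:ℝ) (CC E)) y := by
    intro y hy
    exact (hasDerivAt_uu hE hc hy.1.le hy.2.le).hasDerivWithinAt
  have hinj : Set.InjOn (uu E c) (Ioo (1:ℝ) (CC E)) :=
    ((strictMonoOn_uu hE hc).mono Ioo_subset_Icc_self).injOn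
  have himg := image_uu hE hc
  have hmain := MeasureTheory.integral_image_eq_integral_abs_deriv_smul
    measurableSet_Ioo hder hinj
    (fun t : ℝ => ((t:ℝ):ℂ)^(a-1/2) * ((1-t:ℝ):ℂ)^(-a))
  rw [himg] at hmain
  have hptw : ∀ y ∈ Ioo (1:ℝ) (CC E),
      |2*c*QQ E y/(DD E c y)^2| • (((uu E c y:ℝ):ℂ)^(a-1/2) * ((1 - uu E c y:ℝ):ℂ)^(-a))
      = ((uu E c y :ℝ):ℂ)^(a-1/2) * ((1 - uu E c y:ℝ):ℂ)^(-a)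
        * ((2*c*QQ E y/(DD E c y)^2 : ℝ):ℂ) := by
    intro y hy
    have hQ := QQ_pos hE hy.1.le hy.2.le
    have hD := DD_pos hE hc hy.1.le hy.2.le
    have hpos : 0 < 2*c*QQ E y/(DD E c y)^2 := by positivity
    rw [abs_of_pos hpos, Complex.real_smul]
    ring
  rw [MeasureTheory.setIntegral_congr_fun measurableSet_Ioo hptw] at hmain
  rw [← hmain]
  rw [Complex.betaIntegral, intervalIntegral.integral_of_le (by norm_num : (0:ℝ) ≤ 1),
    MeasureTheory.integral_Ioc_eq_integral_Ioo]
  apply MeasureTheory.setIntegral_congr_fun measurableSet_Ioo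
  intro t ht
  rw [show a + 1/2 - 1 = a - 1/2 by ring, show (1:ℂ) - a - 1 = -a by ring]
  push_cast
  rfl


lemma measurable_ofReal_cpow_const {α : Type*} [MeasurableSpace α] {g : α → ℝ}
    (hg : Measurable g) (w : ℂ) : Measurable (fun x => ((g x : ℝ):ℂ)^w) := by
  have heq : (fun x => ((g x:ℝ):ℂ)^w)
      = fun x => if ((g x : ℝ):ℂ) = 0 then (if w = 0 then 1 else 0)
          else Complex.exp (Complex.log ((g x:ℝ):ℂ) * w) := by
    funext x
    rw [Complex.cpow_def]
  rw [heq]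
  have hg' : Measurable (fun x => ((g x:ℝ):ℂ)) := Complex.measurable_ofReal.comp hg
  apply Measurable.ite
  · exact hg' (measurableSet_singleton 0)
  · exact measurable_const
  · exact (hg'.clog.mul_const w).cexp

lemma measurable_DD : Measurable (fun p : ℝ × ℝ => DD E p.2 p.1) := by
  unfold DD; fun_prop

lemma measurable_uu : Measurable (fun p : ℝ × ℝ => uu E p.2 p.1) := by
  unfold uu DD; fun_prop

/-- the full integrand as a function on pairs (y, c) -/
def FF (a : ℂ) (E : ℝ) (p : ℝ × ℝ) : ℂ :=
  ((p.2:ℝ):ℂ)^(a-1) * ((uu E p.2 p.1 :ℝ):ℂ)^(a-1/2) * ((1 - uu E p.2 p.1:ℝ):ℂ)^(-a)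
    * ((2*p.2*QQ E p.1/(DD E p.2 p.1)^2 : ℝ):ℂ)

lemma measurable_FF (a : ℂ) : Measurable (FF a E) := by
  apply Measurable.mul
  apply Measurable.mul
  apply Measurable.mul
  · exact measurable_ofReal_cpow_const measurable_snd _
  · exact measurable_ofReal_cpow_const measurable_uu _
  · exact measurable_ofReal_cpow_const (measurable_const.sub measurable_uu) _
  · apply Complex.measurable_ofReal.comp
    apply Measurable.div
    · apply Measurable.mul
      · fun_prop
      · unfold QQ; fun_prop
    · exact (measurable_DD).pow measurable_const

lemma norm_FF (a : ℂ) (ha0 : a.re = 0) (hE : 1 < E) {c y : ℝ}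
    (hc : c ∈ Ioo E⁻¹ E) (hy : y ∈ Ioo 1 (CC E)) :
    ‖FF a E (y, c)‖ = 2 * ((y^2-1) ^ (-(1/2):ℝ) * (QQ E y * (DD E c y) ^ (-(3/2):ℝ))) := by
  have hcpos : 0 < c := lt_trans (hEinv_pos hE) hc.1
  have h1 := hy.1
  have h2 := hy.2
  have hD := DD_pos hE hcpos h1.le h2.le
  have hu := uu_pos hE hcpos h1 h2.le
  have h1u := one_sub_uu_pos hE hcpos h1.le h2
  have hQ := QQ_pos hE h1.le h2.le
  have hpos : 0 < 2*c*QQ E y/(DD E c y)^2 := by positivity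
  have hre1 : (a - 1).re = -1 := by rw [Complex.sub_re, ha0, Complex.one_re]; norm_num
  have hre2 : (a - 1/2).re = -(1/2) := by
    rw [Complex.sub_re, ha0, show ((1:ℂ)/2) = ((1/2:ℝ):ℂ) by norm_num, Complex.ofReal_re]
    norm_num
  have hre3 : (-a).re = 0 := by rw [Complex.neg_re, ha0, neg_zero]
  rw [FF]
  simp only [norm_mul, Real.norm_eq_abs,
    Complex.norm_cpow_eq_rpow_re_of_pos hcpos, Complex.norm_cpow_eq_rpow_re_of_pos hu,
    Complex.norm_cpow_eq_rpow_re_of_pos h1u, Complex.norm_real]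
  rw [hre1, hre2, hre3, Real.rpow_zero, abs_of_pos hpos, mul_one]
  rw [← real_part_eq hE hcpos h1 h2, Real.rpow_neg_one]

lemma bound_FF (a : ℂ) (ha0 : a.re = 0) (hE : 1 < E) {c y : ℝ}
    (hc : c ∈ Ioo E⁻¹ E) (hy : y ∈ Ioo 1 (CC E)) :
    ‖FF a E (y, c)‖ ≤ (4 * CC E^2 * ((1-E⁻¹)^2) ^ (-(3/2):ℝ)) * (y-1) ^ (-(1/2):ℝ) := by
  rw [norm_FF a ha0 hE hc hy]
  have hcpos : 0 < c := lt_trans (hEinv_pos hE) hc.1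
  have h1 := hy.1
  have h2 := hy.2
  have hD := DD_pos hE hcpos h1.le h2.le
  have hQ := QQ_pos hE h1.le h2.le
  have hC := one_lt_CC hE
  have hy1 : 0 < y - 1 := by linarith
  have hy2 : 0 < y^2 - 1 := by nlinarith
  have hEi : 0 < 1 - E⁻¹ := by linarith [hEinv_lt_one hE]
  have b1 : (y^2-1) ^ (-(1/2):ℝ) ≤ (y-1) ^ (-(1/2):ℝ) := by
    apply Real.rpow_le_rpow_of_nonpos hy1 (by nlinarith) (by norm_num)
  have b2 : QQ E y ≤ 2 * CC E^2 := by rw [QQ]; nlinarith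
  have b3 : (DD E c y) ^ (-(3/2):ℝ) ≤ ((1-E⁻¹)^2) ^ (-(3/2):ℝ) := by
    apply Real.rpow_le_rpow_of_nonpos (by positivity) (DD_lower hE hc.1.le h1.le h2.le)
      (by norm_num)
  have hb1 : (0:ℝ) < (y-1) ^ (-(1/2):ℝ) := Real.rpow_pos_of_pos hy1 _
  have hb3 : (0:ℝ) < ((1-E⁻¹)^2) ^ (-(3/2):ℝ) := Real.rpow_pos_of_pos (by positivity) _
  have hDpow : (0:ℝ) < (DD E c y) ^ (-(3/2):ℝ) := Real.rpow_pos_of_pos hD _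
  calc 2 * ((y^2-1) ^ (-(1/2):ℝ) * (QQ E y * (DD E c y) ^ (-(3/2):ℝ)))
      ≤ 2 * ((y-1) ^ (-(1/2):ℝ) * ((2 * CC E^2) * (((1-E⁻¹)^2) ^ (-(3/2):ℝ)))) := by
        apply mul_le_mul_of_nonneg_left _ (by norm_num)
        apply mul_le_mul b1 _ (by positivity) hb1.le
        apply mul_le_mul b2 b3 hDpow.le (by positivity)
    _ = (4 * CC E^2 * ((1-E⁻¹)^2) ^ (-(3/2):ℝ)) * (y-1) ^ (-(1/2):ℝ) := by ring

lemma integrable_bound (hE : 1 < E) (K : ℝ) :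
    MeasureTheory.Integrable
      (fun p : ℝ × ℝ => K * (p.1-1) ^ (-(1/2):ℝ))
      ((MeasureTheory.volume.restrict (Ioo (1:ℝ) (CC E))).prod
        (MeasureTheory.volume.restrict (Ioo E⁻¹ E))) := by
  have h1C := one_lt_CC hE
  have hInt : MeasureTheory.IntegrableOn (fun y : ℝ => K * (y-1) ^ (-(1/2):ℝ))
      (Ioo (1:ℝ) (CC E)) := by
    have h0 : IntervalIntegrable (fun x : ℝ => x ^ (-(1/2):ℝ)) MeasureTheory.volume 0 (CC E - 1) :=
      intervalIntegral.intervalIntegrable_rpow' (by norm_num)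
    have h1 : IntervalIntegrable (fun x : ℝ => (x - 1) ^ (-(1/2):ℝ)) MeasureTheory.volume
        (0+1) ((CC E - 1)+1) := h0.comp_sub_right 1
    norm_num at h1
    have h2 := (h1.const_mul K).1
    rw [integrableOn_Ioc_iff_integrableOn_Ioo] at h2
    exact h2
  have hone : MeasureTheory.Integrable (fun _ : ℝ => (1:ℝ))
      (MeasureTheory.volume.restrict (Ioo E⁻¹ E)) := by
    rw [MeasureTheory.integrable_const_iff]
    right
    exact isFiniteMeasure_restrict.mpr measure_Ioo_lt_top.ne
  have := MeasureTheory.Integrable.mul_prod hInt hone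
  simpa using this

lemma integrable_FF (a : ℂ) (ha0 : a.re = 0) (hE : 1 < E) :
    MeasureTheory.Integrable (FF a E)
      ((MeasureTheory.volume.restrict (Ioo (1:ℝ) (CC E))).prod
        (MeasureTheory.volume.restrict (Ioo E⁻¹ E))) := by
  apply MeasureTheory.Integrable.mono' (integrable_bound hE _)
  · exact (measurable_FF a).aestronglyMeasurable
  · rw [MeasureTheory.Measure.prod_restrict, MeasureTheory.ae_restrict_iff'
      (MeasurableSet.prod measurableSet_Ioo measurableSet_Ioo)]
    filter_upwards with p hp
    obtain ⟨hy, hc⟩ := hp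
    have : p = (p.1, p.2) := rfl
    rw [this]
    exact bound_FF a ha0 hE hc hy


lemma cInt (a : ℂ) (ha : a ≠ 0) (hE : 1 < E) :
    ∫ c in E⁻¹..E, (c:ℂ)^(a-1) = ((E:ℝ):ℂ)^a/a - ((E⁻¹:ℝ):ℂ)^a/a := by
  have hIE : E⁻¹ < E := lt_trans (hEinv_lt_one hE) hE
  have hderiv : ∀ c ∈ Set.uIcc E⁻¹ E,
      HasDerivAt (fun x : ℝ => ((x:ℝ):ℂ)^a/a) (((c:ℝ):ℂ)^(a-1)) c := by
    intro c hc
    rw [Set.uIcc_of_le hIE.le] at hc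
    have hc0 : c ≠ 0 := (lt_of_lt_of_le (hEinv_pos hE) hc.1).ne'
    have hr1 : a - 1 ≠ -1 := by
      intro h; apply ha; linear_combination h
    have h := hasDerivAt_ofReal_cpow_const' hc0 hr1
    have e : a - 1 + 1 = a := by ring
    rw [e] at h
    exact h
  have hint : IntervalIntegrable (fun c : ℝ => ((c:ℝ):ℂ)^(a-1)) MeasureTheory.volume E⁻¹ E := by
    apply ContinuousOn.intervalIntegrable
    intro c hc
    rw [Set.uIcc_of_le hIE.le] at hc
    have hc0 : c ≠ 0 := (lt_of_lt_of_le (hEinv_pos hE) hc.1).ne'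
    exact (Complex.continuousAt_ofReal_cpow_const c (a-1) (Or.inr hc0)).continuousWithinAt
  rw [intervalIntegral.integral_eq_sub_of_hasDerivAt hderiv hint]

lemma main_mid (a : ℂ) (ha0 : a.re = 0) (hE : 1 < E) :
    ∫ y in (1:ℝ)..(CC E), ((CC E - y:ℝ):ℂ)^(-a) * ((y^2-1:ℝ):ℂ)^(a-1/2)
    = (2:ℂ)^(a-2) * (∫ c in E⁻¹..E, (c:ℂ)^(a-1)) * Complex.betaIntegral (a + 1/2) (1-a) := by
  have h1C := one_lt_CC hE
  have hIE : E⁻¹ < E := lt_trans (hEinv_lt_one hE) hE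
  have h2ne : (2:ℂ) ≠ 0 := by norm_num
  rw [intervalIntegral.integral_of_le h1C.le, integral_Ioc_eq_integral_Ioo]
  have hstep : ∀ y ∈ Ioo (1:ℝ) (CC E),
      ((CC E - y:ℝ):ℂ)^(-a) * ((y^2-1:ℝ):ℂ)^(a-1/2)
      = (2:ℂ)^(a-2) * ∫ c in Ioo E⁻¹ E, FF a E (y, c) := by
    intro y hy
    have hs1 := step1 a hE hy.1 hy.2
    rw [intervalIntegral.integral_of_le hIE.le, integral_Ioc_eq_integral_Ioo] at hs1
    have : (∫ c in Ioo E⁻¹ E, FF a E (y, c))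
        = (2:ℂ)^(2-a) * (((CC E - y:ℝ):ℂ)^(-a) * ((y^2-1:ℝ):ℂ)^(a-1/2)) := by
      rw [← mul_assoc, ← hs1]
      rfl
    rw [this, ← mul_assoc, ← Complex.cpow_add _ _ h2ne]
    norm_num
  rw [MeasureTheory.setIntegral_congr_fun measurableSet_Ioo hstep]
  rw [integral_const_mul]
  have hswap : (∫ y in Ioo (1:ℝ) (CC E), ∫ c in Ioo E⁻¹ E, FF a E (y, c))
      = ∫ c in Ioo E⁻¹ E, ∫ y in Ioo (1:ℝ) (CC E), FF a E (y, c) := by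
    apply MeasureTheory.integral_integral_swap
    exact integrable_FF a ha0 hE
  rw [hswap]
  have hinner : ∀ c ∈ Ioo (E⁻¹) E,
      (∫ y in Ioo (1:ℝ) (CC E), FF a E (y, c))
      = ((c:ℝ):ℂ)^(a-1) * Complex.betaIntegral (a + 1/2) (1-a) := by
    intro c hc
    have hcpos : 0 < c := lt_trans (hEinv_pos hE) hc.1
    have : (∫ y in Ioo (1:ℝ) (CC E), FF a E (y, c))
        = ∫ y in Ioo (1:ℝ) (CC E), ((c:ℝ):ℂ)^(a-1) *
            (((uu E c y :ℝ):ℂ)^(a-1/2) * ((1 - uu E c y:ℝ):ℂ)^(-a)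
              * ((2*c*QQ E y/(DD E c y)^2 : ℝ):ℂ)) := by
      apply MeasureTheory.setIntegral_congr_fun measurableSet_Ioo
      intro y hy
      simp only [FF]
      ring
    rw [this, integral_const_mul]
    congr 1
    exact step3 a hE hcpos
  rw [MeasureTheory.setIntegral_congr_fun measurableSet_Ioo hinner]
  rw [integral_mul_const]
  rw [intervalIntegral.integral_of_le hIE.le, integral_Ioc_eq_integral_Ioo]
  ring

end LegAux
end LegendreAux

open LegAux in
theorem legendre_fractional_integral_three_dim (v : ℝ) (hv : 0 < v) (ν : ℝ) (hν : ν ≠ 0) :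
    ∫ y in (1 : ℝ)..Real.cosh v,
        ((Real.cosh v - y : ℝ) : ℂ) ^ (-(Complex.I * ν)) *
          ((y ^ 2 - 1 : ℝ) : ℂ) ^ (-(1 / 2 : ℂ) + Complex.I * ν) =
      (2 : ℂ) ^ (Complex.I * ν) * Complex.Gamma (1 / 2 + Complex.I * ν) *
          Complex.Gamma (1 - Complex.I * ν) *
        ((Real.sin (ν * v) : ℝ) : ℂ) / ((Real.sqrt Real.pi : ℝ) * (ν : ℂ)) := by
  set E := Real.exp v with hE_def
  set a := Complex.I * (ν:ℂ) with ha_def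
  have hE : 1 < E := Real.one_lt_exp_iff.mpr hv
  have ha0 : a.re = 0 := by simp [ha_def]
  have haneq : a ≠ 0 := mul_ne_zero Complex.I_ne_zero (by exact_mod_cast hν)
  have hcosh : Real.cosh v = CC E := by rw [Real.cosh_eq, Real.exp_neg, CC]
  have hsq : (0:ℝ) < Real.sqrt Real.pi := Real.sqrt_pos.mpr Real.pi_pos
  have hsq' : ((Real.sqrt Real.pi:ℝ):ℂ) ≠ 0 := by exact_mod_cast hsq.ne'
  have hν' : ((ν:ℝ):ℂ) ≠ 0 := by exact_mod_cast hν
  rw [hcosh, show -(1/2:ℂ) + a = a - 1/2 by ring]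
  rw [main_mid a ha0 hE, cInt a haneq hE]
  have hEa : ((E:ℝ):ℂ)^a = Complex.exp (((ν*v : ℝ):ℂ) * Complex.I) := by
    have hne : ((E:ℝ):ℂ) ≠ 0 := by exact_mod_cast (Real.exp_pos v).ne'
    rw [Complex.cpow_def_of_ne_zero hne, ← Complex.ofReal_log (Real.exp_pos v).le]
    congr 1
    rw [Real.log_exp]
    push_cast
    ring
  have hEinv : (E⁻¹ : ℝ) = Real.exp (-v) := by rw [hE_def, Real.exp_neg]
  have hEia : ((E⁻¹:ℝ):ℂ)^a = Complex.exp (((-(ν*v) : ℝ):ℂ) * Complex.I) := by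
    have hpos : (0:ℝ) < E⁻¹ := by rw [hEinv]; exact Real.exp_pos _
    have hne : ((E⁻¹:ℝ):ℂ) ≠ 0 := by exact_mod_cast hpos.ne'
    rw [Complex.cpow_def_of_ne_zero hne, ← Complex.ofReal_log hpos.le]
    congr 1
    rw [show Real.log E⁻¹ = -v by rw [hEinv, Real.log_exp]]
    push_cast
    ring
  have hdiff : ((E:ℝ):ℂ)^a/a - ((E⁻¹:ℝ):ℂ)^a/a = 2 * ((Real.sin (ν*v):ℝ):ℂ) / ((ν:ℝ):ℂ) := by
    rw [hEa, hEia, Complex.exp_mul_I, Complex.exp_mul_I]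
    simp only [Complex.ofReal_neg, Complex.cos_neg, Complex.sin_neg]
    rw [Complex.ofReal_sin, ha_def]
    have hI : Complex.I ≠ 0 := Complex.I_ne_zero
    field_simp
    ring
  rw [hdiff]
  have h₁ : (0:ℝ) < (a + 1/2).re := by
    rw [Complex.add_re, ha0, show ((1:ℂ)/2) = ((1/2:ℝ):ℂ) by norm_num, Complex.ofReal_re]
    norm_num
  have h₂ : (0:ℝ) < ((1:ℂ) - a).re := by
    rw [Complex.sub_re, ha0, Complex.one_re]
    norm_num
  have hβ := Complex.Gamma_mul_Gamma_eq_betaIntegral h₁ h₂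
  rw [show a + 1/2 + (1 - a) = 3/2 by ring] at hβ
  have hG32 : Complex.Gamma (3/2) = ((Real.sqrt Real.pi :ℝ):ℂ)/2 := by
    rw [show (3/2:ℂ) = 1/2 + 1 by norm_num, Complex.Gamma_add_one _ (by norm_num),
      Complex.Gamma_one_half_eq]
    rw [show ((Real.pi:ℝ):ℂ)^(1/2 : ℂ) = ((Real.pi ^ ((1:ℝ)/2) : ℝ):ℂ) by
      rw [Complex.ofReal_cpow Real.pi_pos.le]; norm_num]
    rw [← Real.sqrt_eq_rpow]
    ring
  have hG32ne : Complex.Gamma (3/2) ≠ 0 := by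
    rw [hG32]
    exact div_ne_zero hsq' two_ne_zero
  have hbeta : Complex.betaIntegral (a + 1/2) (1 - a)
      = Complex.Gamma (a+1/2) * Complex.Gamma (1-a) / Complex.Gamma (3/2) := by
    rw [eq_div_iff hG32ne, hβ]
    ring
  rw [hbeta, hG32]
  rw [show (1/2 : ℂ) + a = a + 1/2 by ring]
  have h4 : (2:ℂ)^((2:ℕ):ℂ) = 4 := by
    rw [Complex.cpow_natCast]; norm_num
  have h2 : (2:ℂ)^(a-(2:ℂ)) = (2:ℂ)^a / 4 := by
    rw [show a-(2:ℂ) = a + (-((2:ℕ):ℂ)) by push_cast; ring,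
      Complex.cpow_add _ _ (by norm_num : (2:ℂ) ≠ 0), Complex.cpow_neg, h4]
    ring
  rw [h2]
  field_simp
  ring
end
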